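/- arXiv:2102.01925 — 4 statements merged into one kernel-verified Lean document; each statement's English description precedes it below -/
import Mathlib

section
/- Let τ > 1 and let Σ_YY = U_YY Λ_YY U_YY^T be an eigendecomposition of Σ_YY with orthonormal eigenvectors u_{YY,1}, …, u_{YY,m} and eigenvalues λ_{YY,1} ≥ … ≥ λ_{YY,m} > 0. Then for every k ∈ {1, …, m}, the vector a = ±√(2 λ_{YY,k} log τ) · u_{YY,k} satisfies P_ND(a') ≤ P_ND(a) for all a' ∈ ℝ^m; that is, these vectors maximize the probability of non-detection over all attack vectors. -/
open MeasureTheory Matrix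

/-- The complementary error function `erfc x = (2/√π) ∫_x^∞ e^{-t²} dt`. -/
noncomputable def erfc (x : ℝ) : ℝ :=
  (2 / Real.sqrt Real.pi) * ∫ t in Set.Ioi x, Real.exp (-t ^ 2)

/-- Density of the multivariate Gaussian `N(μ, S)` on `ℝ^m` (w.r.t. Lebesgue measure). -/
noncomputable def gaussPdf {m : ℕ} (μ : Fin m → ℝ) (S : Matrix (Fin m) (Fin m) ℝ)
    (y : Fin m → ℝ) : ℝ :=
  (Real.sqrt ((2 * Real.pi) ^ m * S.det))⁻¹ *
    Real.exp (-(1 / 2) * ((y - μ) ⬝ᵥ S⁻¹ *ᵥ (y - μ)))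

/-- Quadratic form `aᵀ S⁻¹ a`. -/
noncomputable def quadInv {m : ℕ} (S : Matrix (Fin m) (Fin m) ℝ) (a : Fin m → ℝ) : ℝ :=
  a ⬝ᵥ S⁻¹ *ᵥ a

/-- Likelihood ratio `L(y, a) = exp((1/2) aᵀ S⁻¹ a − aᵀ S⁻¹ y)`. -/
noncomputable def LRT {m : ℕ} (S : Matrix (Fin m) (Fin m) ℝ) (a y : Fin m → ℝ) : ℝ :=
  Real.exp ((1 / 2) * quadInv S a - a ⬝ᵥ S⁻¹ *ᵥ y)

/-- Probability of non-detection: `P[L(Y_a, a) > τ]` where `Y_a ~ N(a, S)`. -/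
noncomputable def PND {m : ℕ} (S : Matrix (Fin m) (Fin m) ℝ) (τ : ℝ) (a : Fin m → ℝ) : ℝ :=
  ∫ y in {y : Fin m → ℝ | LRT S a y > τ}, gaussPdf a S y


noncomputable def stdPhi (r : ℝ) : ℝ :=
  ∫ t in Set.Iio r, (Real.sqrt (2 * Real.pi))⁻¹ * Real.exp (-(1 / 2) * t ^ 2)

lemma phi_integrable : Integrable (fun t : ℝ => (Real.sqrt (2 * Real.pi))⁻¹ * Real.exp (-(1 / 2) * t ^ 2)) := by
  have h : (0:ℝ) < 1/2 := by norm_num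
  exact (integrable_exp_neg_mul_sq h).const_mul _

lemma phi_total : ∫ t : ℝ, (Real.sqrt (2 * Real.pi))⁻¹ * Real.exp (-(1 / 2) * t ^ 2) = 1 := by
  rw [MeasureTheory.integral_const_mul]
  have h := integral_gaussian (1/2 : ℝ)
  have h2 : Real.pi / (1/2 : ℝ) = 2 * Real.pi := by ring
  rw [h2] at h
  rw [show (fun t : ℝ => Real.exp (-(1 / 2) * t ^ 2)) = fun x : ℝ => Real.exp (-(1/2 : ℝ) * x ^ 2) from rfl,
    h, inv_mul_cancel₀]
  positivity

lemma stdPhi_nonneg (r : ℝ) : 0 ≤ stdPhi r :=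
  setIntegral_nonneg measurableSet_Iio (fun t _ => by positivity)

lemma stdPhi_mono {r r' : ℝ} (h : r ≤ r') : stdPhi r ≤ stdPhi r' := by
  apply setIntegral_mono_set phi_integrable.integrableOn
  · exact Filter.Eventually.of_forall (fun t => by positivity)
  · exact (Set.Iio_subset_Iio h).eventuallyLE

lemma sqrt_pow' (x : ℝ) (h : 0 ≤ x) (n : ℕ) : Real.sqrt x ^ n = Real.sqrt (x ^ n) := by
  symm
  rw [Real.sqrt_eq_iff_eq_sq] <;> try positivity
  rw [← pow_mul, mul_comm, pow_mul, Real.sq_sqrt h]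

lemma exists_onb_extension {m : ℕ} (hm : 0 < m) (v : EuclideanSpace ℝ (Fin m))
    (hv1 : ∑ i, v i * v i = 1) :
    ∃ bb : OrthonormalBasis (Fin m) ℝ (EuclideanSpace ℝ (Fin m)), bb ⟨0, hm⟩ = v ∧
      (∀ i j, ∑ k, bb i k * bb j k = if i = j then (1:ℝ) else 0) := by
  classical
  set i0 : Fin m := ⟨0, hm⟩
  have hORT : Orthonormal ℝ (Set.restrict {i0} (fun _ : Fin m => v)) := by
    rw [orthonormal_iff_ite]
    intro i j
    have : i = j := Subtype.ext (by rw [i.2, j.2])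
    subst this
    simp only [if_pos rfl, Set.restrict_apply]
    simp only [PiLp.inner_apply, Real.inner_apply]
    rw [if_pos trivial]
    exact hv1
  obtain ⟨bb, hbb⟩ := hORT.exists_orthonormalBasis_extension_of_card_eq (by simp)
  refine ⟨bb, hbb i0 rfl, fun i j => ?_⟩
  have := (orthonormal_iff_ite.mp bb.orthonormal) i j
  simpa only [PiLp.inner_apply, Real.inner_apply] using this

lemma halfspace_integral {m : ℕ} (S : Matrix (Fin m) (Fin m) ℝ)
    (u : Fin m → Fin m → ℝ) (lam : Fin m → ℝ)
    (horth : ∀ i j, u i ⬝ᵥ u j = if i = j then (1 : ℝ) else 0)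
    (heig : ∀ i, S *ᵥ u i = lam i • u i) (hpos : ∀ i, 0 < lam i)
    (b : Fin m → ℝ) (hb : b ≠ 0) (c : ℝ) :
    ∫ x, Set.indicator {x : Fin m → ℝ | b ⬝ᵥ x < c} (gaussPdf 0 S) x
      = stdPhi (c / Real.sqrt (b ⬝ᵥ S *ᵥ b)) := by
  classical
  rcases Nat.eq_zero_or_pos m with hm | hm
  · subst hm; exact absurd (funext fun i => i.elim0) hb
  -- ## algebra
  set P : Matrix (Fin m) (Fin m) ℝ := Matrix.of (fun i j => u j i) with hP
  have hPtP : Pᵀ * P = 1 := by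
    ext i j
    simpa [Matrix.mul_apply, hP, Matrix.one_apply, dotProduct, mul_comm] using horth i j
  have hPPt : P * Pᵀ = 1 := mul_eq_one_comm.mp hPtP
  set D : Matrix (Fin m) (Fin m) ℝ := Matrix.diagonal lam with hD
  have hSP : S * P = P * D := by
    ext i j
    have := congrFun (heig j) i
    simp [Matrix.mulVec, dotProduct] at this
    simp [Matrix.mul_apply, hP, hD, Matrix.diagonal, this, mul_comm]
  have hSd : S = P * D * Pᵀ := by
    calc S = S * (P * Pᵀ) := by rw [hPPt, Matrix.mul_one]
    _ = (S * P) * Pᵀ := by rw [Matrix.mul_assoc]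
    _ = P * D * Pᵀ := by rw [hSP]
  have hdetP : P.det ^ 2 = 1 := by
    have := congrArg Matrix.det hPtP
    rwa [Matrix.det_mul, Matrix.det_transpose, ← sq, Matrix.det_one] at this
  have hdetS : S.det = ∏ i, lam i := by
    rw [hSd, Matrix.det_mul, Matrix.det_mul, Matrix.det_transpose, hD, Matrix.det_diagonal]
    linear_combination (∏ i, lam i) * hdetP
  have hdetSpos : 0 < S.det := by
    rw [hdetS]; exact Finset.prod_pos (fun i _ => hpos i)
  have hSinv : S⁻¹ = P * Matrix.diagonal (fun i => (lam i)⁻¹) * Pᵀ := by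
    apply Matrix.inv_eq_right_inv
    calc S * (P * Matrix.diagonal (fun i => (lam i)⁻¹) * Pᵀ)
        = P * D * (Pᵀ * P) * Matrix.diagonal (fun i => (lam i)⁻¹) * Pᵀ := by
          rw [hSd]; noncomm_ring
    _ = P * (D * Matrix.diagonal (fun i => (lam i)⁻¹)) * Pᵀ := by
          rw [hPtP]; noncomm_ring
    _ = P * Pᵀ := by
          rw [hD, Matrix.diagonal_mul_diagonal]
          simp [mul_inv_cancel₀ (ne_of_gt (hpos _))]
    _ = 1 := hPPt
  -- quadratic form positivity
  have hquad : ∀ x : Fin m → ℝ, x ≠ 0 → 0 < x ⬝ᵥ S *ᵥ x := by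
    intro x hx
    have hy : Pᵀ *ᵥ x ≠ 0 := by
      intro h
      apply hx
      have : P *ᵥ (Pᵀ *ᵥ x) = x := by
        rw [Matrix.mulVec_mulVec, hPPt, Matrix.one_mulVec]
      rw [h, Matrix.mulVec_zero] at this
      exact this.symm
    set y := Pᵀ *ᵥ x with hyy
    have key : x ⬝ᵥ S *ᵥ x = ∑ i, lam i * y i ^ 2 := by
      rw [hSd, show (P * D * Pᵀ) *ᵥ x = P *ᵥ (D *ᵥ y) by
        simp [hyy, Matrix.mulVec_mulVec, Matrix.mul_assoc]]
      rw [Matrix.dotProduct_mulVec, ← Matrix.mulVec_transpose, ← hyy]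
      rw [hD]
      simp [dotProduct, Matrix.mulVec_diagonal]
      exact Finset.sum_congr rfl (fun i _ => by ring)
    rw [key]
    obtain ⟨i, hi⟩ : ∃ i, y i ≠ 0 := by
      by_contra h
      push_neg at h
      exact hy (funext h)
    apply Finset.sum_pos' (fun j _ => mul_nonneg (hpos j).le (sq_nonneg _))
    exact ⟨i, Finset.mem_univ i, mul_pos (hpos i) (by positivity)⟩
  -- ## the matrices B, R, A
  set sqv : Fin m → ℝ := fun i => Real.sqrt (lam i) with hsqv
  set B : Matrix (Fin m) (Fin m) ℝ := P * Matrix.diagonal sqv with hB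
  have hBBt : B * Bᵀ = S := by
    rw [hB, Matrix.transpose_mul, Matrix.diagonal_transpose]
    calc P * Matrix.diagonal sqv * (Matrix.diagonal sqv * Pᵀ)
        = P * (Matrix.diagonal sqv * Matrix.diagonal sqv) * Pᵀ := by noncomm_ring
    _ = P * D * Pᵀ := by
        rw [Matrix.diagonal_mul_diagonal, hD,
          show (fun i => sqv i * sqv i) = lam from funext fun i => Real.mul_self_sqrt (hpos i).le]
    _ = S := hSd.symm
  have hBtSiB : Bᵀ * S⁻¹ * B = 1 := by
    rw [hB, hSinv, Matrix.transpose_mul, Matrix.diagonal_transpose]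
    calc Matrix.diagonal sqv * Pᵀ * (P * Matrix.diagonal (fun i => (lam i)⁻¹) * Pᵀ) * (P * Matrix.diagonal sqv)
        = Matrix.diagonal sqv * (Pᵀ * P) * Matrix.diagonal (fun i => (lam i)⁻¹) * (Pᵀ * P) * Matrix.diagonal sqv := by
          noncomm_ring
    _ = Matrix.diagonal sqv * Matrix.diagonal (fun i => (lam i)⁻¹) * Matrix.diagonal sqv := by
          rw [hPtP]; noncomm_ring
    _ = 1 := by
          rw [Matrix.diagonal_mul_diagonal, Matrix.diagonal_mul_diagonal]
          have : (fun i => sqv i * (lam i)⁻¹ * sqv i) = fun _ : Fin m => (1:ℝ) := by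
            funext i
            have h1 := Real.mul_self_sqrt (hpos i).le
            have h2 := (hpos i).ne'
            simp only [hsqv]
            field_simp
            linarith [h1]
          rw [this, Matrix.diagonal_one]
  -- ## the vector v and orthonormal basis
  set v : Fin m → ℝ := Bᵀ *ᵥ b with hv
  have hvv : v ⬝ᵥ v = b ⬝ᵥ S *ᵥ b := by
    calc v ⬝ᵥ v = (b ᵥ* B) ⬝ᵥ (Bᵀ *ᵥ b) := by rw [hv, Matrix.mulVec_transpose]
    _ = b ⬝ᵥ (B *ᵥ (Bᵀ *ᵥ b)) := (Matrix.dotProduct_mulVec b B (Bᵀ *ᵥ b)).symm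
    _ = b ⬝ᵥ S *ᵥ b := by rw [Matrix.mulVec_mulVec, hBBt]
  have hbSb : 0 < b ⬝ᵥ S *ᵥ b := hquad b hb
  set s := Real.sqrt (b ⬝ᵥ S *ᵥ b) with hsdef
  have hs : 0 < s := Real.sqrt_pos.mpr hbSb
  have hss : s * s = b ⬝ᵥ S *ᵥ b := Real.mul_self_sqrt hbSb.le
  set w : EuclideanSpace ℝ (Fin m) := WithLp.toLp 2 (s⁻¹ • v) with hw
  have hwv : ∀ k, w k = s⁻¹ * v k := fun k => rfl
  have hvw : ∀ k, v k = s * w k := by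
    intro k
    rw [hwv]
    field_simp
  have hww : ∑ i, w i * w i = 1 := by
    have h1 : ∑ i, w i * w i = s⁻¹ * s⁻¹ * (v ⬝ᵥ v) := by
      rw [dotProduct, Finset.mul_sum]
      exact Finset.sum_congr rfl fun i _ => by rw [hwv]; ring
    rw [h1, hvv, ← hss]
    field_simp
  obtain ⟨bb, hbb0, hbbd⟩ := exists_onb_extension hm w hww
  set i0 : Fin m := ⟨0, hm⟩ with hi0
  set R : Matrix (Fin m) (Fin m) ℝ := Matrix.of (fun i j => bb j i) with hR
  have hRtR : Rᵀ * R = 1 := by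
    ext i j
    simpa [Matrix.mul_apply, hR, Matrix.one_apply] using hbbd i j
  have hdetR : R.det ^ 2 = 1 := by
    have := congrArg Matrix.det hRtR
    rwa [Matrix.det_mul, Matrix.det_transpose, ← sq, Matrix.det_one] at this
  set A : Matrix (Fin m) (Fin m) ℝ := B * R with hA
  have hAtSiA : Aᵀ * S⁻¹ * A = 1 := by
    rw [hA, Matrix.transpose_mul]
    calc Rᵀ * Bᵀ * S⁻¹ * (B * R) = Rᵀ * (Bᵀ * S⁻¹ * B) * R := by noncomm_ring
    _ = Rᵀ * R := by rw [hBtSiB]; noncomm_ring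
    _ = 1 := hRtR
  have hSiT : S⁻¹ᵀ = S⁻¹ := by
    rw [hSinv]
    simp [Matrix.transpose_mul, Matrix.diagonal_transpose, Matrix.mul_assoc]
  have hquadA : ∀ z : Fin m → ℝ, (A *ᵥ z) ⬝ᵥ S⁻¹ *ᵥ (A *ᵥ z) = z ⬝ᵥ z := by
    intro z
    calc (A *ᵥ z) ⬝ᵥ S⁻¹ *ᵥ (A *ᵥ z)
        = (A *ᵥ z) ⬝ᵥ ((S⁻¹ * A) *ᵥ z) := by rw [Matrix.mulVec_mulVec]
    _ = ((A *ᵥ z) ᵥ* (S⁻¹ * A)) ⬝ᵥ z := Matrix.dotProduct_mulVec _ _ _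
    _ = ((S⁻¹ * A)ᵀ *ᵥ (A *ᵥ z)) ⬝ᵥ z := by rw [Matrix.mulVec_transpose]
    _ = (((S⁻¹ * A)ᵀ * A) *ᵥ z) ⬝ᵥ z := by rw [Matrix.mulVec_mulVec]
    _ = z ⬝ᵥ z := by
        rw [show (S⁻¹ * A)ᵀ * A = Aᵀ * S⁻¹ * A by rw [Matrix.transpose_mul, hSiT, Matrix.mul_assoc],
          hAtSiA, Matrix.one_mulVec]
  have hAb : Aᵀ *ᵥ b = fun i => if i = i0 then s else 0 := by
    funext i
    have h1 : (Aᵀ *ᵥ b) i = (Rᵀ *ᵥ v) i := by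
      rw [hA, Matrix.transpose_mul, ← Matrix.mulVec_mulVec, hv]
    rw [h1]
    have h2 : (Rᵀ *ᵥ v) i = s * ∑ k, bb i k * w k := by
      simp only [Matrix.mulVec, dotProduct, Matrix.transpose_apply, hR, Matrix.of_apply]
      rw [Finset.mul_sum]
      exact Finset.sum_congr rfl fun k _ => by rw [hvw k]; ring
    rw [h2, ← hbb0, hbbd i i0]
    split_ifs <;> ring
  have hdetA2 : A.det ^ 2 = S.det := by
    have hprodsq : (∏ i, sqv i) ^ 2 = ∏ i, lam i := by
      rw [← Finset.prod_pow]
      exact Finset.prod_congr rfl fun i _ => Real.sq_sqrt (hpos i).le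
    calc A.det ^ 2 = P.det ^ 2 * R.det ^ 2 * (∏ i, sqv i) ^ 2 := by
          rw [hA, Matrix.det_mul, hB, Matrix.det_mul, Matrix.det_diagonal]; ring
    _ = ∏ i, lam i := by rw [hdetP, hdetR, hprodsq]; ring
    _ = S.det := hdetS.symm
  have hdetA : |A.det| = Real.sqrt S.det := by
    rw [← Real.sqrt_sq_eq_abs, hdetA2]
  have hdetA0 : A.det ≠ 0 := by
    intro h
    rw [h] at hdetA2
    simp at hdetA2
    exact hdetSpos.ne hdetA2
  -- ## measurability
  set g : (Fin m → ℝ) → ℝ := Set.indicator {x : Fin m → ℝ | b ⬝ᵥ x < c} (gaussPdf 0 S) with hg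
  have hdotm : Measurable fun x : Fin m → ℝ => b ⬝ᵥ x := by
    unfold dotProduct
    exact Finset.measurable_sum _ fun i _ => measurable_const.mul (measurable_pi_apply i)
  have hsetm : MeasurableSet {x : Fin m → ℝ | b ⬝ᵥ x < c} :=
    measurableSet_lt hdotm measurable_const
  have hpdfc : Continuous (gaussPdf 0 S) := by
    unfold gaussPdf
    apply continuous_const.mul
    apply Real.continuous_exp.comp
    apply continuous_const.mul
    simp only [sub_zero]
    unfold dotProduct Matrix.mulVec
    exact continuous_finset_sum _ fun i _ => (continuous_apply i).mul
      (continuous_finset_sum _ fun j _ => continuous_const.mul (continuous_apply j))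
  have hgm : Measurable g := hpdfc.measurable.indicator hsetm
  have hT : Measurable (Matrix.toLin' A) :=
    (LinearMap.continuous_of_finiteDimensional (Matrix.toLin' A)).measurable
  -- ## change of variables
  have hCoV : ∫ z, g (A *ᵥ z) = |A.det|⁻¹ * ∫ x, g x := by
    have hmap := Real.map_matrix_volume_pi_eq_smul_volume_pi (M := A) hdetA0
    have h1 : ∫ z, g (A *ᵥ z) = ∫ z, g ((Matrix.toLin' A) z) := by
      simp only [Matrix.toLin'_apply]
    rw [h1, ← MeasureTheory.integral_map hT.aemeasurable hgm.aestronglyMeasurable, hmap,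
      MeasureTheory.integral_smul_measure]
    rw [ENNReal.toReal_ofReal (abs_nonneg _), abs_inv, smul_eq_mul]
  have hint : ∫ x, g x = |A.det| * ∫ z, g (A *ᵥ z) := by
    rw [hCoV, ← mul_assoc, mul_inv_cancel₀ (abs_ne_zero.mpr hdetA0), one_mul]
  -- ## pointwise formula for g ∘ A
  set φ : ℝ → ℝ := fun t => (Real.sqrt (2 * Real.pi))⁻¹ * Real.exp (-(1 / 2) * t ^ 2) with hφ
  have hgA : ∀ z : Fin m → ℝ, g (A *ᵥ z)
      = (Real.sqrt S.det)⁻¹ *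
        Set.indicator {z : Fin m → ℝ | z i0 < c / s} (fun z => ∏ i, φ (z i)) z := by
    intro z
    have hdot : b ⬝ᵥ (A *ᵥ z) = s * z i0 := by
      rw [Matrix.dotProduct_mulVec, ← Matrix.mulVec_transpose, hAb]
      simp only [dotProduct, ite_mul, zero_mul]
      rw [Finset.sum_ite_eq' Finset.univ i0 (fun i => s * z i)]
      simp
    have hcond : (b ⬝ᵥ (A *ᵥ z) < c) ↔ (z i0 < c / s) := by
      rw [hdot, lt_div_iff₀ hs]
      constructor <;> intro h <;> linarith
    have hprodφ : ∏ i, φ (z i) = (Real.sqrt ((2 * Real.pi) ^ m))⁻¹ *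
        Real.exp (-(1 / 2) * (z ⬝ᵥ z)) := by
      simp only [hφ]
      rw [Finset.prod_mul_distrib, Finset.prod_const, ← Real.exp_sum]
      congr 1
      · rw [Finset.card_univ, Fintype.card_fin, inv_pow,
          sqrt_pow' _ (by positivity) m]
      · congr 1
        rw [dotProduct, Finset.mul_sum]
        exact Finset.sum_congr rfl fun i _ => by ring
    have hpdf : gaussPdf 0 S (A *ᵥ z) = (Real.sqrt S.det)⁻¹ * ∏ i, φ (z i) := by
      unfold gaussPdf
      rw [sub_zero, hquadA z, hprodφ, Real.sqrt_mul (by positivity)]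
      rw [mul_inv]
      ring
    by_cases hzy : z i0 < c / s
    · rw [hg, Set.indicator_of_mem (show A *ᵥ z ∈ {x : Fin m → ℝ | b ⬝ᵥ x < c} from hcond.mpr hzy),
        Set.indicator_of_mem (show z ∈ {z : Fin m → ℝ | z i0 < c / s} from hzy), hpdf]
    · rw [hg, Set.indicator_of_notMem (show A *ᵥ z ∉ {x : Fin m → ℝ | b ⬝ᵥ x < c} by
          simpa [Set.mem_setOf_eq, hcond] using hzy),
        Set.indicator_of_notMem (show z ∉ {z : Fin m → ℝ | z i0 < c / s} from hzy), mul_zero]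
  -- ## product integral
  have hprodint : ∫ z : Fin m → ℝ,
      Set.indicator {z : Fin m → ℝ | z i0 < c / s} (fun z => ∏ i, φ (z i)) z = stdPhi (c / s) := by
    classical
    set f : Fin m → ℝ → ℝ :=
      fun i t => if i = i0 then Set.indicator (Set.Iio (c / s)) φ t else φ t with hf
    have hpt : ∀ z : Fin m → ℝ,
        Set.indicator {z : Fin m → ℝ | z i0 < c / s} (fun z => ∏ i, φ (z i)) z
          = ∏ i, f i (z i) := by
      intro z
      have hsplit : ∏ i, f i (z i) = f i0 (z i0) * ∏ i ∈ Finset.univ.erase i0, φ (z i) := by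
        rw [← Finset.mul_prod_erase Finset.univ _ (Finset.mem_univ i0)]
        congr 1
        refine Finset.prod_congr rfl fun i hi => ?_
        rw [hf]
        simp [Finset.ne_of_mem_erase hi]
      by_cases hz : z i0 < c / s
      · rw [Set.indicator_of_mem (show z ∈ {z : Fin m → ℝ | z i0 < c / s} from hz), hsplit]
        have hfi0 : f i0 (z i0) = φ (z i0) := by
          rw [hf]
          simp [Set.indicator_of_mem (show z i0 ∈ Set.Iio (c / s) from hz)]
        rw [hfi0]
        exact (Finset.mul_prod_erase Finset.univ (fun i => φ (z i)) (Finset.mem_univ i0)).symm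
      · rw [Set.indicator_of_notMem (show z ∉ {z : Fin m → ℝ | z i0 < c / s} from hz), hsplit]
        have hfi0 : f i0 (z i0) = 0 := by
          rw [hf]
          simp [Set.indicator_of_notMem (show z i0 ∉ Set.Iio (c / s) from hz)]
        rw [hfi0, zero_mul]
    rw [show (fun z : Fin m → ℝ =>
        Set.indicator {z : Fin m → ℝ | z i0 < c / s} (fun z => ∏ i, φ (z i)) z)
        = fun z : Fin m → ℝ => ∏ i, f i (z i) from funext hpt]
    rw [MeasureTheory.integral_fintype_prod_volume_eq_prod f]
    have hint1 : ∀ i, (∫ t, f i t) = if i = i0 then stdPhi (c / s) else 1 := by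
      intro i
      rw [hf]
      split_ifs with h
      · simp only [if_pos h]
        rw [MeasureTheory.integral_indicator measurableSet_Iio]
        rfl
      · simp only [if_neg h]
        exact phi_total
    rw [Finset.prod_congr rfl (fun i _ => hint1 i)]
    simp
  -- ## final assembly
  rw [hint, show (fun z => g (A *ᵥ z))
      = fun z => (Real.sqrt S.det)⁻¹ *
          Set.indicator {z : Fin m → ℝ | z i0 < c / s} (fun z => ∏ i, φ (z i)) z
      from funext hgA]
  rw [MeasureTheory.integral_const_mul, hprodint, hdetA, ← mul_assoc,
    mul_inv_cancel₀ (Real.sqrt_ne_zero'.mpr hdetSpos), one_mul]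

lemma spectral_facts {m : ℕ} (S : Matrix (Fin m) (Fin m) ℝ)
    (u : Fin m → Fin m → ℝ) (lam : Fin m → ℝ)
    (horth : ∀ i j, u i ⬝ᵥ u j = if i = j then (1 : ℝ) else 0)
    (heig : ∀ i, S *ᵥ u i = lam i • u i) (hpos : ∀ i, 0 < lam i) :
    0 < S.det ∧ S⁻¹ᵀ = S⁻¹ ∧ (∀ x : Fin m → ℝ, x ≠ 0 → 0 < x ⬝ᵥ S *ᵥ x) := by
  classical
  set P : Matrix (Fin m) (Fin m) ℝ := Matrix.of (fun i j => u j i) with hP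
  have hPtP : Pᵀ * P = 1 := by
    ext i j
    simpa [Matrix.mul_apply, hP, Matrix.one_apply, dotProduct, mul_comm] using horth i j
  have hPPt : P * Pᵀ = 1 := mul_eq_one_comm.mp hPtP
  set D : Matrix (Fin m) (Fin m) ℝ := Matrix.diagonal lam with hD
  have hSP : S * P = P * D := by
    ext i j
    have := congrFun (heig j) i
    simp [Matrix.mulVec, dotProduct] at this
    simp [Matrix.mul_apply, hP, hD, Matrix.diagonal, this, mul_comm]
  have hSd : S = P * D * Pᵀ := by
    calc S = S * (P * Pᵀ) := by rw [hPPt, Matrix.mul_one]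
    _ = (S * P) * Pᵀ := by rw [Matrix.mul_assoc]
    _ = P * D * Pᵀ := by rw [hSP]
  have hdetP : P.det ^ 2 = 1 := by
    have := congrArg Matrix.det hPtP
    rwa [Matrix.det_mul, Matrix.det_transpose, ← sq, Matrix.det_one] at this
  have hdetS : S.det = ∏ i, lam i := by
    rw [hSd, Matrix.det_mul, Matrix.det_mul, Matrix.det_transpose, hD, Matrix.det_diagonal]
    linear_combination (∏ i, lam i) * hdetP
  have hdetSpos : 0 < S.det := by
    rw [hdetS]; exact Finset.prod_pos (fun i _ => hpos i)
  have hSinv : S⁻¹ = P * Matrix.diagonal (fun i => (lam i)⁻¹) * Pᵀ := by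
    apply Matrix.inv_eq_right_inv
    calc S * (P * Matrix.diagonal (fun i => (lam i)⁻¹) * Pᵀ)
        = P * D * (Pᵀ * P) * Matrix.diagonal (fun i => (lam i)⁻¹) * Pᵀ := by
          rw [hSd]; noncomm_ring
    _ = P * (D * Matrix.diagonal (fun i => (lam i)⁻¹)) * Pᵀ := by
          rw [hPtP]; noncomm_ring
    _ = P * Pᵀ := by
          rw [hD, Matrix.diagonal_mul_diagonal]
          simp [mul_inv_cancel₀ (ne_of_gt (hpos _))]
    _ = 1 := hPPt
  have hSiT : S⁻¹ᵀ = S⁻¹ := by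
    rw [hSinv]
    simp [Matrix.transpose_mul, Matrix.diagonal_transpose, Matrix.mul_assoc]
  refine ⟨hdetSpos, hSiT, ?_⟩
  intro x hx
  have hy : Pᵀ *ᵥ x ≠ 0 := by
    intro h
    apply hx
    have : P *ᵥ (Pᵀ *ᵥ x) = x := by
      rw [Matrix.mulVec_mulVec, hPPt, Matrix.one_mulVec]
    rw [h, Matrix.mulVec_zero] at this
    exact this.symm
  set y := Pᵀ *ᵥ x with hyy
  have key : x ⬝ᵥ S *ᵥ x = ∑ i, lam i * y i ^ 2 := by
    rw [hSd, show (P * D * Pᵀ) *ᵥ x = P *ᵥ (D *ᵥ y) by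
      simp [hyy, Matrix.mulVec_mulVec, Matrix.mul_assoc]]
    rw [Matrix.dotProduct_mulVec, ← Matrix.mulVec_transpose, ← hyy]
    rw [hD]
    simp [dotProduct, Matrix.mulVec_diagonal]
    exact Finset.sum_congr rfl (fun i _ => by ring)
  rw [key]
  obtain ⟨i, hi⟩ : ∃ i, y i ≠ 0 := by
    by_contra h
    push_neg at h
    exact hy (funext h)
  apply Finset.sum_pos' (fun j _ => mul_nonneg (hpos j).le (sq_nonneg _))
  exact ⟨i, Finset.mem_univ i, mul_pos (hpos i) (by positivity)⟩

lemma PND_formula {m : ℕ} (S : Matrix (Fin m) (Fin m) ℝ)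
    (u : Fin m → Fin m → ℝ) (lam : Fin m → ℝ)
    (horth : ∀ i j, u i ⬝ᵥ u j = if i = j then (1 : ℝ) else 0)
    (heig : ∀ i, S *ᵥ u i = lam i • u i) (hpos : ∀ i, 0 < lam i)
    (τ : ℝ) (hτ : 0 < τ) (a : Fin m → ℝ) (ha : a ≠ 0) :
    PND S τ a = stdPhi ((-(quadInv S a) / 2 - Real.log τ) / Real.sqrt (quadInv S a)) := by
  classical
  obtain ⟨hdetSpos, hSiT, hquad⟩ := spectral_facts S u lam horth heig hpos
  have hSS : S * S⁻¹ = 1 := Matrix.mul_nonsing_inv S (isUnit_iff_ne_zero.mpr hdetSpos.ne')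
  set b := S⁻¹ *ᵥ a with hbdef
  have hSb : S *ᵥ b = a := by rw [hbdef, Matrix.mulVec_mulVec, hSS, Matrix.one_mulVec]
  have hb : b ≠ 0 := fun h => ha (by rw [← hSb, h, Matrix.mulVec_zero])
  set q := quadInv S a with hq
  have hba' : b ⬝ᵥ a = q := by
    rw [hbdef, dotProduct_comm]
    rfl
  have hqb : b ⬝ᵥ S *ᵥ b = q := by rw [hSb, hba']
  have hba : ∀ y, LRT S a y > τ ↔ b ⬝ᵥ y < q / 2 - Real.log τ := by
    intro y
    unfold LRT
    rw [show a ⬝ᵥ S⁻¹ *ᵥ y = b ⬝ᵥ y by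
      rw [hbdef, Matrix.dotProduct_mulVec, ← Matrix.mulVec_transpose, hSiT]]
    rw [gt_iff_lt, show τ = Real.exp (Real.log τ) from (Real.exp_log hτ).symm, Real.exp_lt_exp]
    rw [Real.log_exp, ← hq]
    constructor <;> intro h <;> linarith
  unfold PND
  rw [show {y : Fin m → ℝ | LRT S a y > τ} = {y | b ⬝ᵥ y < q / 2 - Real.log τ} from
    Set.ext fun y => hba y]
  have hdotm : Measurable fun x : Fin m → ℝ => b ⬝ᵥ x := by
    unfold dotProduct
    exact Finset.measurable_sum _ fun i _ => measurable_const.mul (measurable_pi_apply i)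
  have hsetm : MeasurableSet {y : Fin m → ℝ | b ⬝ᵥ y < q / 2 - Real.log τ} :=
    measurableSet_lt hdotm measurable_const
  rw [← MeasureTheory.integral_indicator hsetm]
  have htrans : ∀ x : Fin m → ℝ,
      Set.indicator {y : Fin m → ℝ | b ⬝ᵥ y < q / 2 - Real.log τ} (gaussPdf a S) (x + a)
        = Set.indicator {x : Fin m → ℝ | b ⬝ᵥ x < -q / 2 - Real.log τ} (gaussPdf 0 S) x := by
    intro x
    have h1 : gaussPdf a S (x + a) = gaussPdf 0 S x := by
      unfold gaussPdf
      simp [add_sub_cancel_right]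
    have h2 : (x + a ∈ {y : Fin m → ℝ | b ⬝ᵥ y < q / 2 - Real.log τ})
        ↔ (x ∈ {x : Fin m → ℝ | b ⬝ᵥ x < -q / 2 - Real.log τ}) := by
      simp only [Set.mem_setOf_eq, dotProduct_add, hba']
      constructor <;> intro h <;> linarith
    by_cases hx : x ∈ {x : Fin m → ℝ | b ⬝ᵥ x < -q / 2 - Real.log τ}
    · rw [Set.indicator_of_mem (h2.mpr hx), Set.indicator_of_mem hx, h1]
    · rw [Set.indicator_of_notMem (fun hmem => hx (h2.mp hmem)), Set.indicator_of_notMem hx]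
  calc ∫ y, Set.indicator {y : Fin m → ℝ | b ⬝ᵥ y < q / 2 - Real.log τ} (gaussPdf a S) y
      = ∫ x, Set.indicator {y : Fin m → ℝ | b ⬝ᵥ y < q / 2 - Real.log τ} (gaussPdf a S) (x + a) :=
        (MeasureTheory.integral_add_right_eq_self _ a).symm
  _ = ∫ x, Set.indicator {x : Fin m → ℝ | b ⬝ᵥ x < -q / 2 - Real.log τ} (gaussPdf 0 S) x := by
        simp only [htrans]
  _ = stdPhi ((-q / 2 - Real.log τ) / Real.sqrt (b ⬝ᵥ S *ᵥ b)) :=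
        halfspace_integral S u lam horth heig hpos b hb _
  _ = stdPhi ((-q / 2 - Real.log τ) / Real.sqrt q) := by rw [hqb]

lemma opt_ineq {L q : ℝ} (hL : 0 < L) (hq : 0 < q) :
    (-q / 2 - L) / Real.sqrt q ≤ -Real.sqrt (2 * L) := by
  rw [div_le_iff₀ (Real.sqrt_pos.mpr hq)]
  have h1 : Real.sqrt q ^ 2 = q := Real.sq_sqrt hq.le
  have h2 : Real.sqrt (2 * L) ^ 2 = 2 * L := Real.sq_sqrt (by positivity)
  nlinarith [sq_nonneg (Real.sqrt q - Real.sqrt (2 * L)), Real.sqrt_nonneg q,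
    Real.sqrt_nonneg (2 * L)]

theorem max_nondetection_attack_when_tau_gt_one
    {m n : ℕ} (H : Matrix (Fin m) (Fin n) ℝ) (Sxx : Matrix (Fin n) (Fin n) ℝ)
    (hXX : Sxx.PosDef) (σ : ℝ) (hσ : 0 < σ)
    (S : Matrix (Fin m) (Fin m) ℝ)
    (hS : S = H * Sxx * H.transpose + σ ^ 2 • (1 : Matrix (Fin m) (Fin m) ℝ))
    (τ : ℝ) (hτ : 1 < τ)
    -- eigendecomposition of Σ_YY: orthonormal eigenvectors with eigenvalues in descending order
    (u : Fin m → Fin m → ℝ) (lam : Fin m → ℝ)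
    (horth : ∀ i j, u i ⬝ᵥ u j = if i = j then (1 : ℝ) else 0)
    (heig : ∀ i, S *ᵥ u i = lam i • u i)
    (hdec : Antitone lam) (hpos : ∀ i, 0 < lam i) :
    ∀ k : Fin m, ∀ ε : ℝ, (ε = 1 ∨ ε = -1) →
      ∀ a' : Fin m → ℝ,
        PND S τ a' ≤ PND S τ (ε • Real.sqrt (lam k * (2 * Real.log τ)) • u k) := by
  intro k ε hε a'
  have hL : 0 < Real.log τ := Real.log_pos hτ
  set L := Real.log τ with hLdef
  set s' := Real.sqrt (lam k * (2 * L)) with hs'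
  have hlam2L : 0 < lam k * (2 * L) := mul_pos (hpos k) (by positivity)
  have hs'pos : 0 < s' := Real.sqrt_pos.mpr hlam2L
  have hs'sq : s' * s' = lam k * (2 * L) := Real.mul_self_sqrt hlam2L.le
  set a : Fin m → ℝ := ε • s' • u k with hadef
  have hε2 : ε * ε = 1 := by rcases hε with h | h <;> simp [h]
  have hεne : ε ≠ 0 := by rcases hε with h | h <;> norm_num [h]
  obtain ⟨hdetSpos, hSiT, hquadS⟩ := spectral_facts S u lam horth heig hpos
  have hSiS : S⁻¹ * S = 1 := Matrix.nonsing_inv_mul S (isUnit_iff_ne_zero.mpr hdetSpos.ne')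
  have hSiu : ∀ i, S⁻¹ *ᵥ u i = (lam i)⁻¹ • u i := by
    intro i
    have h1 : S⁻¹ *ᵥ (S *ᵥ u i) = u i := by
      rw [Matrix.mulVec_mulVec, hSiS, Matrix.one_mulVec]
    rw [heig i, Matrix.mulVec_smul] at h1
    calc S⁻¹ *ᵥ u i = (lam i)⁻¹ • (lam i • (S⁻¹ *ᵥ u i)) := by
          rw [smul_smul, inv_mul_cancel₀ (hpos i).ne', one_smul]
    _ = (lam i)⁻¹ • u i := by rw [h1]
  have hukuk : u k ⬝ᵥ u k = 1 := by simpa using horth k k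
  have huk0 : u k ≠ 0 := by
    intro h
    rw [h, zero_dotProduct] at hukuk
    exact zero_ne_one hukuk
  have ha0 : a ≠ 0 := by
    intro h
    apply huk0
    have h2 : (ε * s') • u k = 0 := by rwa [hadef, smul_smul] at h
    exact (smul_eq_zero.mp h2).resolve_left (mul_ne_zero hεne hs'pos.ne')
  have hqa : quadInv S a = 2 * L := by
    unfold quadInv
    rw [hadef, Matrix.mulVec_smul, Matrix.mulVec_smul, hSiu k]
    rw [smul_dotProduct, smul_dotProduct, dotProduct_smul, dotProduct_smul, dotProduct_smul]
    simp only [smul_eq_mul]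
    rw [hukuk]
    have hlamne := (hpos k).ne'
    field_simp
    linear_combination s' * s' * hε2 + hs'sq
  have hPa : PND S τ a = stdPhi (-Real.sqrt (2 * L)) := by
    rw [PND_formula S u lam horth heig hpos τ (lt_trans one_pos hτ) a ha0, hqa]
    congr 1
    rw [show -(2 * L) / 2 - L = -(2 * L) by ring, neg_div]
    rw [Real.div_sqrt]
  by_cases ha' : a' = 0
  · subst ha'
    have hset : {y : Fin m → ℝ | LRT S 0 y > τ} = ∅ := by
      ext y
      simp only [Set.mem_setOf_eq, Set.mem_empty_iff_false, iff_false, gt_iff_lt, not_lt]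
      unfold LRT quadInv
      simp only [zero_dotProduct, mul_zero, sub_zero, Real.exp_zero]
      linarith
    have h0 : PND S τ (0 : Fin m → ℝ) = 0 := by
      unfold PND
      rw [hset, MeasureTheory.setIntegral_empty]
    rw [h0, hPa]
    exact stdPhi_nonneg _
  · rw [hPa, PND_formula S u lam horth heig hpos τ (lt_trans one_pos hτ) a' ha']
    have hq'pos : 0 < quadInv S a' :=
      (spectral_facts S⁻¹ u (fun i => (lam i)⁻¹) horth (fun i => hSiu i)
        (fun i => inv_pos.mpr (hpos i))).2.2 a' ha'
    exact stdPhi_mono (opt_ineq hL hq'pos)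
end

section
/- For every nonzero a ∈ ℝ^m, the probability that the likelihood-ratio detector does not detect the attack a equals P_ND(a) = (1/2)·erfc(((1/2) a^T Σ_YY^{-1} a + log τ)/√(2 a^T Σ_YY^{-1} a)); that is, if Y_a ~ N(a, Σ_YY), then P[exp((1/2) a^T Σ_YY^{-1} a − a^T Σ_YY^{-1} Y_a) > τ] equals this erfc expression. -/
set_option maxHeartbeats 1000000

open MeasureTheory Matrix Set

lemma dot_mulVec_transpose {m : ℕ} (M : Matrix (Fin m) (Fin m) ℝ) (u w : Fin m → ℝ) :
    u ⬝ᵥ M *ᵥ w = (Mᵀ *ᵥ u) ⬝ᵥ w := by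
  rw [Matrix.dotProduct_mulVec]
  congr 1
  have := Matrix.vecMul_transpose Mᵀ u
  rwa [Matrix.transpose_transpose] at this

lemma mulVec_dot {m : ℕ} (M : Matrix (Fin m) (Fin m) ℝ) (u z : Fin m → ℝ) :
    (M *ᵥ u) ⬝ᵥ z = u ⬝ᵥ (Mᵀ *ᵥ z) := by
  rw [dot_mulVec_transpose, Matrix.transpose_transpose]

lemma aux_Iio_gauss (t : ℝ) :
    ∫ x in Set.Iio t, Real.exp (-(1/2) * x ^ 2) =
      Real.sqrt 2 * ∫ u in Set.Ioi (-t / Real.sqrt 2), Real.exp (-u ^ 2) := by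
  have h2 : (0:ℝ) < Real.sqrt 2 := Real.sqrt_pos.mpr two_pos
  have hsq : Real.sqrt 2 ^ 2 = 2 := Real.sq_sqrt (by norm_num)
  have h1 : ∫ x in Set.Iio t, Real.exp (-(1/2) * x ^ 2)
      = ∫ x in Set.Ioi (-t), Real.exp (-(1/2) * x ^ 2) := by
    rw [← integral_Iic_eq_integral_Iio, ← neg_neg t,
      ← integral_comp_neg_Ioi]
    simp [neg_sq]
  rw [h1]
  have h3 : ∀ x : ℝ, Real.exp (-(1/2) * x ^ 2)
      = (fun u => Real.exp (-u ^ 2)) ((Real.sqrt 2)⁻¹ * x) := by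
    intro x
    simp only [mul_pow, inv_pow, hsq]
    ring_nf
  calc ∫ x in Set.Ioi (-t), Real.exp (-(1/2) * x ^ 2)
      = ∫ x in Set.Ioi (-t), (fun u => Real.exp (-u ^ 2)) ((Real.sqrt 2)⁻¹ * x) := by
        exact setIntegral_congr_fun measurableSet_Ioi (fun x _ => h3 x)
    _ = ((Real.sqrt 2)⁻¹)⁻¹ • ∫ u in Set.Ioi ((Real.sqrt 2)⁻¹ * (-t)), Real.exp (-u ^ 2) :=
        integral_comp_mul_left_Ioi (fun u => Real.exp (-u ^ 2)) (-t) (inv_pos.mpr h2)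
    _ = Real.sqrt 2 * ∫ u in Set.Ioi (-t / Real.sqrt 2), Real.exp (-u ^ 2) := by
        rw [inv_inv, smul_eq_mul, inv_mul_eq_div, neg_div]

lemma aux_halfspace {m : ℕ} (i0 : Fin m) (t : ℝ) :
    ∫ x : Fin m → ℝ, Set.indicator {x : Fin m → ℝ | x i0 < t}
        (fun x => Real.exp (-(1/2) * (x ⬝ᵥ x))) x
      = Real.sqrt (2 * Real.pi) ^ (m - 1) * ∫ s in Set.Iio t, Real.exp (-(1/2) * s ^ 2) := by
  classical
  set g : ℝ → ℝ := fun s => Real.exp (-(1/2) * s ^ 2) with hg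
  set f : Fin m → ℝ → ℝ := fun i s =>
    if i = i0 then Set.indicator (Set.Iio t) g s else g s with hf
  have hpoint : ∀ x : Fin m → ℝ,
      Set.indicator {x : Fin m → ℝ | x i0 < t} (fun x => Real.exp (-(1/2) * (x ⬝ᵥ x))) x
        = ∏ i, f i (x i) := by
    intro x
    by_cases hx : x i0 < t
    · rw [Set.indicator_of_mem (show x ∈ {x : Fin m → ℝ | x i0 < t} from hx)]
      have hfi : ∀ i ∈ Finset.univ, f i (x i) = g (x i) := by
        intro i _
        by_cases hi : i = i0
        · subst hi; simp only [hf, if_pos rfl]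
          exact Set.indicator_of_mem (show x i ∈ Set.Iio t from hx) g
        · simp only [hf, if_neg hi]
      rw [Finset.prod_congr rfl hfi]
      simp only [hg, ← Real.exp_sum]
      congr 1
      rw [dotProduct, Finset.mul_sum]
      exact Finset.sum_congr rfl (fun i _ => by ring)
    · rw [Set.indicator_of_notMem (show x ∉ {x : Fin m → ℝ | x i0 < t} from hx)]
      symm
      apply Finset.prod_eq_zero (Finset.mem_univ i0)
      simp only [hf, if_pos rfl]
      exact Set.indicator_of_notMem (show x i0 ∉ Set.Iio t from hx) g
  rw [show (fun x : Fin m → ℝ => Set.indicator {x : Fin m → ℝ | x i0 < t}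
        (fun x => Real.exp (-(1/2) * (x ⬝ᵥ x))) x) = fun x => ∏ i, f i (x i) from
      funext hpoint]
  rw [MeasureTheory.integral_fintype_prod_volume_eq_prod (𝕜 := ℝ) (ι := Fin m) f]
  rw [← Finset.mul_prod_erase Finset.univ _ (Finset.mem_univ i0)]
  have h1 : ∫ s, f i0 s = ∫ s in Set.Iio t, g s := by
    simp only [hf, if_pos rfl]
    exact integral_indicator measurableSet_Iio
  have h2 : ∀ i ∈ Finset.univ.erase i0, ∫ s, f i s = Real.sqrt (2 * Real.pi) := by
    intro i hi
    have hi' : i ≠ i0 := (Finset.mem_erase.mp hi).1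
    simp only [hf, if_neg hi', hg]
    rw [show (fun s : ℝ => Real.exp (-(1/2) * s ^ 2)) = fun s : ℝ => Real.exp (-(1/2 : ℝ) * s ^ 2) from rfl]
    rw [integral_gaussian]
    congr 1
    ring
  rw [Finset.prod_congr rfl h2, Finset.prod_const, h1]
  have hcard : (Finset.univ.erase i0).card = m - 1 := by
    rw [Finset.card_erase_of_mem (Finset.mem_univ i0), Finset.card_univ, Fintype.card_fin]
  rw [hcard, mul_comm]

theorem probability_of_nondetection_erfc_formula
    {m n : ℕ} (H : Matrix (Fin m) (Fin n) ℝ) (Sxx : Matrix (Fin n) (Fin n) ℝ)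
    (hXX : Sxx.PosDef) (σ : ℝ) (hσ : 0 < σ)
    (S : Matrix (Fin m) (Fin m) ℝ)
    (hS : S = H * Sxx * H.transpose + σ ^ 2 • (1 : Matrix (Fin m) (Fin m) ℝ))
    (τ : ℝ) (hτ : 0 < τ) :
    ∀ a : Fin m → ℝ, a ≠ 0 →
      PND S τ a =
        (1 / 2) * erfc ((quadInv S a / 2 + Real.log τ) / Real.sqrt (2 * quadInv S a)) := by
  intro a ha
  classical
  rcases Nat.eq_zero_or_pos m with hm | hm
  · exfalso; apply ha; subst hm; exact Subsingleton.elim a 0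
  set i0 : Fin m := ⟨0, hm⟩
  have hSpd : S.PosDef := by
    rw [hS]
    apply Matrix.PosDef.posSemidef_add
    · have := hXX.posSemidef.mul_mul_conjTranspose_same H
      rwa [Matrix.conjTranspose_eq_transpose_of_trivial] at this
    · rw [Matrix.smul_one_eq_diagonal]
      exact Matrix.PosDef.diagonal (fun _ => by positivity)
  have hSsym : Sᵀ = S := by
    have := hSpd.isHermitian
    rwa [Matrix.IsHermitian, Matrix.conjTranspose_eq_transpose_of_trivial] at this
  have hSinv : S⁻¹.PosDef := hSpd.inv
  have hSinvsym : S⁻¹ᵀ = S⁻¹ := by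
    rw [Matrix.transpose_nonsing_inv, hSsym]
  set q := a ⬝ᵥ S⁻¹ *ᵥ a with hqdef
  have hq : 0 < q := by
    have := hSinv.dotProduct_mulVec_pos ha
    simpa using this
  have hdetS : 0 < S.det := hSpd.det_pos
  have hSps : S⁻¹.PosSemidef := hSinv.posSemidef
  open scoped MatrixOrder in set C := CFC.sqrt S⁻¹ with hCdef
  have hCC : C * C = S⁻¹ := by open scoped MatrixOrder in exact CFC.sqrt_mul_sqrt_self S⁻¹ hSps.nonneg
  have hCps : C.PosSemidef := by open scoped MatrixOrder in exact (CFC.sqrt_nonneg S⁻¹).posSemidef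
  have hCsym : Cᵀ = C := by
    have := hCps.1
    rwa [Matrix.IsHermitian, Matrix.conjTranspose_eq_transpose_of_trivial] at this
  have hdetSinv : S⁻¹.det ≠ 0 := ne_of_gt hSinv.det_pos
  have hdetC : C.det ≠ 0 := by
    intro h
    apply hdetSinv
    rw [← hCC, Matrix.det_mul, h, mul_zero]
  have hCinvC : C⁻¹ * C = 1 := Matrix.nonsing_inv_mul C (by simpa using hdetC)
  have hCCinv : C * C⁻¹ = 1 := Matrix.mul_nonsing_inv C (by simpa using hdetC)
  have hCinvsym : C⁻¹ᵀ = C⁻¹ := by rw [Matrix.transpose_nonsing_inv, hCsym]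
  set sq := Real.sqrt q with hsqdef
  have hsq : 0 < sq := Real.sqrt_pos.mpr hq
  have hsq2 : sq * sq = q := Real.mul_self_sqrt hq.le
  set v := C *ᵥ a with hvdef
  have hvv : v ⬝ᵥ v = q := by
    rw [hvdef, dot_mulVec_transpose, hCsym, Matrix.mulVec_mulVec, hCC, dotProduct_comm]
  set e : Fin m → ℝ := Pi.single i0 1 with hedef
  have hee : e ⬝ᵥ e = 1 := by rw [hedef, single_dotProduct]; simp
  set u' := sq⁻¹ • v with hu'def
  have hvu : v = sq • u' := by
    rw [hu'def, smul_smul, mul_inv_cancel₀ (ne_of_gt hsq), one_smul]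
  have huu : u' ⬝ᵥ u' = 1 := by
    rw [hu'def, smul_dotProduct, dotProduct_smul, hvv, smul_eq_mul, smul_eq_mul]
    field_simp
    linarith [hsq2]
  set w := u' - e with hwdef
  set W := Matrix.vecMulVec w w with hWdef
  have hWW : W * W = (w ⬝ᵥ w) • W := by
    ext i j
    simp only [hWdef, Matrix.mul_apply, Matrix.vecMulVec_apply, Matrix.smul_apply,
      smul_eq_mul, dotProduct]
    rw [Finset.sum_mul]
    exact Finset.sum_congr rfl (fun k _ => by ring)
  have hWv : ∀ z : Fin m → ℝ, W *ᵥ z = (w ⬝ᵥ z) • w := by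
    intro z; ext i
    simp only [hWdef, Matrix.mulVec, Matrix.vecMulVec_apply, dotProduct,
      Pi.smul_apply, smul_eq_mul]
    rw [Finset.sum_mul]
    exact Finset.sum_congr rfl (fun k _ => by ring)
  set R := if w = 0 then (1 : Matrix (Fin m) (Fin m) ℝ)
    else 1 - (2 / (w ⬝ᵥ w)) • W with hRdef
  have hwpos : w ≠ 0 → 0 < w ⬝ᵥ w := by
    intro hw
    have hnn : 0 ≤ w ⬝ᵥ w := by
      rw [dotProduct]
      exact Finset.sum_nonneg (fun i _ => mul_self_nonneg _)
    rcases lt_or_eq_of_le hnn with h | h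
    · exact h
    · exact absurd (dotProduct_self_eq_zero.mp h.symm) hw
  have hRsym : Rᵀ = R := by
    rw [hRdef]
    split_ifs with hw
    · simp
    · rw [Matrix.transpose_sub, Matrix.transpose_one, Matrix.transpose_smul]
      congr 2
      ext i j
      simp [hWdef, Matrix.vecMulVec_apply, mul_comm]
  have hRR : R * R = 1 := by
    rw [hRdef]
    split_ifs with hw
    · rw [Matrix.one_mul]
    · have hd0 : 0 < w ⬝ᵥ w := hwpos hw
      simp only [Matrix.sub_mul, Matrix.mul_sub, Matrix.smul_mul, Matrix.mul_smul,
        Matrix.one_mul, Matrix.mul_one, smul_smul]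
      rw [hWW]
      match_scalars
      · ring
      · field_simp
        ring
  have hRu : R *ᵥ u' = e := by
    rw [hRdef]
    split_ifs with hw
    · rw [Matrix.one_mulVec]
      exact sub_eq_zero.mp hw
    · have hd0 : 0 < w ⬝ᵥ w := hwpos hw
      rw [Matrix.sub_mulVec, Matrix.one_mulVec, Matrix.smul_mulVec, hWv u', smul_smul]
      have hwu : w ⬝ᵥ u' = 1 - e ⬝ᵥ u' := by
        rw [hwdef, sub_dotProduct, huu]
      have hww : w ⬝ᵥ w = 2 * (1 - e ⬝ᵥ u') := by
        rw [hwdef, sub_dotProduct, dotProduct_sub, dotProduct_sub, huu, hee,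
          dotProduct_comm u' e]
        ring
      rw [show 2 / (w ⬝ᵥ w) * (w ⬝ᵥ u') = 1 from by
        have hne : (1 : ℝ) - e ⬝ᵥ u' ≠ 0 := by
          intro h0
          rw [hww, h0] at hd0
          simp at hd0
        rw [hwu, hww]
        field_simp]
      rw [one_smul, hwdef]
      abel
  set B := C⁻¹ * R with hBdef
  have hBt : Bᵀ = R * C⁻¹ := by rw [hBdef, Matrix.transpose_mul, hRsym, hCinvsym]
  have hBS : Bᵀ * S⁻¹ = R * C := by
    calc Bᵀ * S⁻¹ = R * C⁻¹ * (C * C) := by rw [hBt, hCC]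
      _ = R * ((C⁻¹ * C) * C) := by simp only [Matrix.mul_assoc]
      _ = R * C := by rw [hCinvC, Matrix.one_mul]
  have hBSB : Bᵀ * S⁻¹ * B = 1 := by
    calc Bᵀ * S⁻¹ * B = R * C * (C⁻¹ * R) := by rw [hBS, hBdef]
      _ = R * ((C * C⁻¹) * R) := by simp only [Matrix.mul_assoc]
      _ = 1 := by rw [hCCinv, Matrix.one_mul, hRR]
  have hdetB2 : B.det * B.det = S.det := by
    have h := congrArg Matrix.det hBSB
    rw [Matrix.det_mul, Matrix.det_mul, Matrix.det_transpose, Matrix.det_one,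
      Matrix.det_nonsing_inv, Ring.inverse_eq_inv'] at h
    field_simp at h
    linarith
  have hdetB : B.det ≠ 0 := by
    intro h0
    rw [h0, mul_zero] at hdetB2
    exact hdetS.ne hdetB2
  have habs : |B.det| = Real.sqrt S.det := by
    rw [← Real.sqrt_mul_self_eq_abs, hdetB2]
  have hq3 : ∀ x : Fin m → ℝ, (B *ᵥ x) ⬝ᵥ S⁻¹ *ᵥ (B *ᵥ x) = x ⬝ᵥ x := by
    intro x
    rw [Matrix.mulVec_mulVec, mulVec_dot, Matrix.mulVec_mulVec, ← Matrix.mul_assoc, hBSB,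
      Matrix.one_mulVec]
  have hq2 : ∀ x : Fin m → ℝ, a ⬝ᵥ S⁻¹ *ᵥ (B *ᵥ x) = sq * x i0 := by
    intro x
    rw [Matrix.mulVec_mulVec, dot_mulVec_transpose, Matrix.transpose_mul, hSinvsym, hBS,
      ← Matrix.mulVec_mulVec, ← hvdef, hvu, Matrix.mulVec_smul, hRu, smul_dotProduct,
      hedef, single_dotProduct, smul_eq_mul, one_mul]
  -- measurability
  have hdotmeas : ∀ c : Fin m → ℝ, Measurable fun y : Fin m → ℝ => c ⬝ᵥ S⁻¹ *ᵥ y := by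
    intro c
    simp only [dotProduct, Matrix.mulVec]
    apply Finset.measurable_sum
    intro i _
    apply Measurable.const_mul
    apply Finset.measurable_sum
    intro j _
    exact (measurable_pi_apply j).const_mul _
  have hzmeas : Measurable fun z : Fin m → ℝ => z ⬝ᵥ S⁻¹ *ᵥ z := by
    simp only [dotProduct, Matrix.mulVec]
    apply Finset.measurable_sum
    intro i _
    exact (measurable_pi_apply i).mul
      (Finset.measurable_sum _ fun j _ => (measurable_pi_apply j).const_mul _)
  have hgmeas : Measurable (gaussPdf a S) := by
    unfold gaussPdf
    exact measurable_const.mul (Real.measurable_exp.comp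
      ((hzmeas.comp (measurable_id.sub measurable_const)).const_mul _))
  have hLmeas : Measurable fun y : Fin m → ℝ => LRT S a y := by
    unfold LRT
    exact Real.measurable_exp.comp (measurable_const.sub (hdotmeas a))
  set E := {y : Fin m → ℝ | LRT S a y > τ} with hEdef
  have hEmeas : MeasurableSet E := measurableSet_lt measurable_const hLmeas
  set K := (Real.sqrt ((2 * Real.pi) ^ m * S.det))⁻¹ with hKdef
  set t₀ := (-(q/2) - Real.log τ) / sq with ht₀def
  have hmem : ∀ x : Fin m → ℝ, (B *ᵥ x + a ∈ E) ↔ x i0 < t₀ := by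
    intro x
    simp only [hEdef, Set.mem_setOf_eq, gt_iff_lt]
    unfold LRT
    rw [show quadInv S a = q from rfl, Matrix.mulVec_add, dotProduct_add, hq2 x, ← hqdef,
      ← Real.log_lt_iff_lt_exp hτ, ht₀def, lt_div_iff₀ hsq]
    constructor <;> intro h <;> nlinarith
  have hgauss : ∀ x : Fin m → ℝ, gaussPdf a S (B *ᵥ x + a)
      = K * Real.exp (-(1/2) * (x ⬝ᵥ x)) := by
    intro x
    unfold gaussPdf
    rw [add_sub_cancel_right, hq3 x, ← hKdef]
  have hpointG : ∀ x : Fin m → ℝ, E.indicator (gaussPdf a S) (B *ᵥ x + a)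
      = K * Set.indicator {x : Fin m → ℝ | x i0 < t₀}
          (fun x => Real.exp (-(1/2) * (x ⬝ᵥ x))) x := by
    intro x
    by_cases hx : x i0 < t₀
    · rw [Set.indicator_of_mem ((hmem x).mpr hx), hgauss x,
        Set.indicator_of_mem (show x ∈ {x : Fin m → ℝ | x i0 < t₀} from hx)]
    · rw [Set.indicator_of_notMem (fun h => hx ((hmem x).mp h)),
        Set.indicator_of_notMem (show x ∉ {x : Fin m → ℝ | x i0 < t₀} from hx), mul_zero]
  have hFmeas : Measurable fun y : Fin m → ℝ => E.indicator (gaussPdf a S) y :=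
    hgmeas.indicator hEmeas
  have hGmeas : Measurable fun z : Fin m → ℝ => E.indicator (gaussPdf a S) (z + a) :=
    hFmeas.comp (measurable_add_const a)
  have step2 : ∫ z, E.indicator (gaussPdf a S) (z + a)
      = |B.det| * ∫ x, E.indicator (gaussPdf a S) (B *ᵥ x + a) := by
    have hmap : Measure.map (Matrix.toLin' B) (volume : Measure (Fin m → ℝ))
        = ENNReal.ofReal |(B.det)⁻¹| • volume :=
      Real.map_matrix_volume_pi_eq_smul_volume_pi hdetB
    have h1 : ∫ x, E.indicator (gaussPdf a S) (Matrix.toLin' B x + a)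
        = |B.det|⁻¹ * ∫ z, E.indicator (gaussPdf a S) (z + a) := by
      rw [← integral_map ((Matrix.toLin' B).continuous_of_finiteDimensional).measurable.aemeasurable
        hGmeas.aestronglyMeasurable, hmap, integral_smul_measure,
        ENNReal.toReal_ofReal (abs_nonneg _), abs_inv, smul_eq_mul]
    calc ∫ z, E.indicator (gaussPdf a S) (z + a)
        = |B.det| * (|B.det|⁻¹ * ∫ z, E.indicator (gaussPdf a S) (z + a)) := by
          rw [← mul_assoc, mul_inv_cancel₀ (abs_ne_zero.mpr hdetB), one_mul]
      _ = |B.det| * ∫ x, E.indicator (gaussPdf a S) (Matrix.toLin' B x + a) := by rw [h1]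
      _ = |B.det| * ∫ x, E.indicator (gaussPdf a S) (B *ᵥ x + a) := by
          simp_rw [Matrix.toLin'_apply]
  have hz : -t₀ / Real.sqrt 2 = (q/2 + Real.log τ) / Real.sqrt (2*q) := by
    rw [ht₀def, Real.sqrt_mul (by norm_num : (0:ℝ) ≤ 2) q, ← hsqdef, ← neg_div, div_div,
      show -(-(q/2) - Real.log τ) = q/2 + Real.log τ from by ring, mul_comm sq (Real.sqrt 2)]
  have hsp : Real.sqrt ((2*Real.pi)^m) = Real.sqrt (2*Real.pi) ^ m := by
    rw [← Real.sqrt_sq (pow_nonneg (Real.sqrt_nonneg _) m)]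
    congr 1
    rw [← pow_mul, mul_comm m 2, pow_mul, Real.sq_sqrt (by positivity)]
  have hKval : K = (Real.sqrt (2*Real.pi) ^ (m-1) * Real.sqrt (2*Real.pi) * Real.sqrt S.det)⁻¹ := by
    rw [hKdef, Real.sqrt_mul (by positivity), hsp, ← pow_succ, Nat.sub_add_cancel hm]
  rw [show quadInv S a = q from rfl]
  rw [erfc]
  calc PND S τ a = ∫ y in E, gaussPdf a S y := rfl
    _ = ∫ y, E.indicator (gaussPdf a S) y := (integral_indicator hEmeas).symm
    _ = ∫ z, E.indicator (gaussPdf a S) (z + a) :=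
        (integral_add_right_eq_self (fun y => E.indicator (gaussPdf a S) y) a).symm
    _ = |B.det| * ∫ x, E.indicator (gaussPdf a S) (B *ᵥ x + a) := step2
    _ = |B.det| * ∫ x, K * Set.indicator {x : Fin m → ℝ | x i0 < t₀}
          (fun x => Real.exp (-(1/2) * (x ⬝ᵥ x))) x := by
        congr 1
        exact integral_congr_ae (Filter.Eventually.of_forall hpointG)
    _ = |B.det| * (K * ∫ x, Set.indicator {x : Fin m → ℝ | x i0 < t₀}
          (fun x => Real.exp (-(1/2) * (x ⬝ᵥ x))) x) := by
        rw [MeasureTheory.integral_const_mul]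
    _ = |B.det| * (K * (Real.sqrt (2 * Real.pi) ^ (m - 1)
          * (Real.sqrt 2 * ∫ u in Set.Ioi (-t₀ / Real.sqrt 2), Real.exp (-u ^ 2)))) := by
        rw [aux_halfspace i0 t₀, aux_Iio_gauss t₀]
    _ = 1 / 2 * (2 / Real.sqrt Real.pi
          * ∫ u in Set.Ioi ((q / 2 + Real.log τ) / Real.sqrt (2 * q)), Real.exp (-u ^ 2)) := by
        rw [hz, habs, hKval]
        have hA : Real.sqrt (2*Real.pi) ^ (m-1) ≠ 0 :=
          pow_ne_zero _ (Real.sqrt_pos.mpr (by positivity)).ne'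
        have hd : Real.sqrt S.det ≠ 0 := (Real.sqrt_pos.mpr hdetS).ne'
        have h2 : Real.sqrt 2 ≠ 0 := (Real.sqrt_pos.mpr two_pos).ne'
        have hp : Real.sqrt Real.pi ≠ 0 := (Real.sqrt_pos.mpr Real.pi_pos).ne'
        rw [Real.sqrt_mul (by norm_num : (0:ℝ) ≤ 2) Real.pi]
        field_simp
end

section
/- Let G = Σ_YY^{-1/2} H Σ_XX² H^T Σ_YY^{-1/2} have eigendecomposition G = U_G Λ_G U_G^T with eigenvalues λ_{G,1} ≥ … ≥ λ_{G,m} ≥ 0 and orthonormal eigenvectors u_{G,1}, …, u_{G,m}. Let L_0 ∈ [0, ∞) with L_0² ≥ log τ. Then the attack vector maximizing the excess distortion a^T Σ_YY^{-1} H Σ_XX² H^T Σ_YY^{-1} a subject to the detection constraint ((1/2) a^T Σ_YY^{-1} a + log τ)/√(2 a^T Σ_YY^{-1} a) ≤ L_0 is a = ±(√2·L_0 + √(2 L_0² − 2 log τ)) · Σ_YY^{1/2} u_{G,1}, whenever a solution exists. -/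
open MeasureTheory Matrix

/-- Excess distortion `aᵀ Σ_YY⁻¹ H Σ_XX² Hᵀ Σ_YY⁻¹ a` induced on the MMSE estimate. -/
noncomputable def distortion {m n : ℕ} (S : Matrix (Fin m) (Fin m) ℝ)
    (H : Matrix (Fin m) (Fin n) ℝ) (Sxx : Matrix (Fin n) (Fin n) ℝ) (a : Fin m → ℝ) : ℝ :=
  a ⬝ᵥ (S⁻¹ * H * (Sxx * Sxx) * H.transpose * S⁻¹) *ᵥ a

set_option maxHeartbeats 1000000 in
theorem max_distortion_attack_with_detection_constraint
    {m n : ℕ} (hm : 0 < m) (H : Matrix (Fin m) (Fin n) ℝ) (Sxx : Matrix (Fin n) (Fin n) ℝ)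
    (hXX : Sxx.PosDef) (σ : ℝ) (hσ : 0 < σ)
    (S : Matrix (Fin m) (Fin m) ℝ)
    (hS : S = H * Sxx * H.transpose + σ ^ 2 • (1 : Matrix (Fin m) (Fin m) ℝ))
    -- R = Σ_YY^{1/2}
    (R : Matrix (Fin m) (Fin m) ℝ) (hRpsd : R.PosSemidef) (hRR : R * R = S)
    -- eigendecomposition of G = Σ_YY^{-1/2} H Σ_XX² Hᵀ Σ_YY^{-1/2}
    (G : Matrix (Fin m) (Fin m) ℝ)
    (hG : G = R⁻¹ * H * (Sxx * Sxx) * H.transpose * R⁻¹)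
    (u : Fin m → Fin m → ℝ) (lam : Fin m → ℝ)
    (horth : ∀ i j, u i ⬝ᵥ u j = if i = j then (1 : ℝ) else 0)
    (heig : ∀ i, G *ᵥ u i = lam i • u i)
    (hdec : Antitone lam) (hnn : ∀ i, 0 ≤ lam i)
    (τ : ℝ) (hτ0 : 0 < τ)
    (L0 : ℝ) (hL0 : 0 ≤ L0) (hL0τ : Real.log τ ≤ L0 ^ 2)
    -- "whenever a solution exists": the constrained maximization admits a solution
    (hex : ∃ b : Fin m → ℝ,
      (quadInv S b / 2 + Real.log τ) / Real.sqrt (2 * quadInv S b) ≤ L0 ∧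
      ∀ b' : Fin m → ℝ,
        (quadInv S b' / 2 + Real.log τ) / Real.sqrt (2 * quadInv S b') ≤ L0 →
        distortion S H Sxx b' ≤ distortion S H Sxx b) :
    ∀ ε : ℝ, (ε = 1 ∨ ε = -1) →
      ∀ a : Fin m → ℝ,
        a = ε • (Real.sqrt 2 * L0 + Real.sqrt (2 * L0 ^ 2 - 2 * Real.log τ)) •
              R *ᵥ u ⟨0, hm⟩ →
        (quadInv S a / 2 + Real.log τ) / Real.sqrt (2 * quadInv S a) ≤ L0 ∧
        ∀ b : Fin m → ℝ,
          (quadInv S b / 2 + Real.log τ) / Real.sqrt (2 * quadInv S b) ≤ L0 →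
          distortion S H Sxx b ≤ distortion S H Sxx a := by
  clear hex
  -- S is positive definite
  have hSpd : S.PosDef := by
    rw [hS]
    refine Matrix.PosDef.posSemidef_add ?_ ?_
    · have h1 := Matrix.PosSemidef.mul_mul_conjTranspose_same
        (Matrix.PosDef.posSemidef hXX) H
      have h2 : Hᴴ = Hᵀ := by ext i j; simp [Matrix.conjTranspose_apply]
      rwa [h2] at h1
    · rw [Matrix.smul_one_eq_diagonal]
      exact Matrix.posDef_diagonal_iff.mpr fun i => by positivity
  have hRdet : IsUnit R.det := by
    have hdet : R.det * R.det = S.det := by rw [← Matrix.det_mul, hRR]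
    have hSdet := hSpd.det_pos
    refine isUnit_iff_ne_zero.mpr fun h => ?_
    rw [h, mul_zero] at hdet; rw [← hdet] at hSdet; exact lt_irrefl 0 hSdet
  have hRsym : Rᵀ = R := by
    have h := hRpsd.1
    ext i j
    have := congrFun (congrFun h i) j
    simpa [Matrix.conjTranspose_apply] using this
  have hRinv_symm : (R⁻¹)ᵀ = R⁻¹ := by rw [Matrix.transpose_nonsing_inv, hRsym]
  have hSinv : S⁻¹ = R⁻¹ * R⁻¹ := by rw [← hRR, Matrix.mul_inv_rev]
  have hRiR : R⁻¹ * R = 1 := Matrix.nonsing_inv_mul R hRdet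
  -- quadratic form and distortion in terms of w = R⁻¹ b
  have hdotinv : ∀ (b x : Fin m → ℝ), b ⬝ᵥ R⁻¹ *ᵥ x = (R⁻¹ *ᵥ b) ⬝ᵥ x := by
    intro b x
    rw [Matrix.dotProduct_mulVec, ← hRinv_symm, Matrix.vecMul_transpose, hRinv_symm]
  have hquad : ∀ b : Fin m → ℝ, quadInv S b = (R⁻¹ *ᵥ b) ⬝ᵥ (R⁻¹ *ᵥ b) := by
    intro b
    rw [quadInv, hSinv, ← Matrix.mulVec_mulVec, hdotinv]
  have hdist : ∀ b : Fin m → ℝ,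
      distortion S H Sxx b = (R⁻¹ *ᵥ b) ⬝ᵥ G *ᵥ (R⁻¹ *ᵥ b) := by
    intro b
    have hmat : S⁻¹ * H * (Sxx * Sxx) * Hᵀ * S⁻¹ = R⁻¹ * (G * R⁻¹) := by
      rw [hG, hSinv]; simp only [Matrix.mul_assoc]
    rw [distortion, hmat, ← Matrix.mulVec_mulVec, hdotinv, Matrix.mulVec_mulVec]
  -- orthogonal eigenbasis
  set U : Matrix (Fin m) (Fin m) ℝ := Matrix.of u with hU
  have hUUt : U * Uᵀ = 1 := by
    ext i j
    simp only [Matrix.mul_apply, Matrix.transpose_apply, Matrix.one_apply]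
    simpa [dotProduct, hU] using horth i j
  have hUtU : Uᵀ * U = 1 := mul_eq_one_comm.mp hUUt
  have hGU : G * Uᵀ = Uᵀ * Matrix.diagonal lam := by
    ext i j
    have h1 : (G * Uᵀ) i j = (G *ᵥ u j) i := by
      simp [Matrix.mul_apply, Matrix.mulVec, dotProduct, hU]
    rw [h1, heig j]
    simp [Matrix.mul_apply, Matrix.diagonal, hU, mul_comm]
  have hGdec : G = Uᵀ * Matrix.diagonal lam * U := by
    calc G = G * (Uᵀ * U) := by rw [hUtU, Matrix.mul_one]
    _ = (G * Uᵀ) * U := by rw [Matrix.mul_assoc]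
    _ = Uᵀ * Matrix.diagonal lam * U := by rw [hGU]
  have hdotU : ∀ (w x : Fin m → ℝ), w ⬝ᵥ Uᵀ *ᵥ x = (U *ᵥ w) ⬝ᵥ x := by
    intro w x
    rw [Matrix.dotProduct_mulVec, Matrix.vecMul_transpose]
  -- the spectral bound
  have hspec : ∀ w : Fin m → ℝ, w ⬝ᵥ G *ᵥ w ≤ lam ⟨0, hm⟩ * (w ⬝ᵥ w) := by
    intro w
    have h1 : w ⬝ᵥ G *ᵥ w = ∑ i, lam i * ((U *ᵥ w) i * (U *ᵥ w) i) := by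
      rw [hGdec, ← Matrix.mulVec_mulVec, ← Matrix.mulVec_mulVec, hdotU]
      simp only [dotProduct, Matrix.mulVec_diagonal]
      exact Finset.sum_congr rfl fun i _ => by ring
    have h2 : w ⬝ᵥ w = ∑ i, (U *ᵥ w) i * (U *ᵥ w) i := by
      have : w ⬝ᵥ w = w ⬝ᵥ (Uᵀ * U) *ᵥ w := by rw [hUtU, Matrix.one_mulVec]
      rw [this, ← Matrix.mulVec_mulVec, hdotU]
      rfl
    rw [h1, h2, Finset.mul_sum]
    refine Finset.sum_le_sum fun i _ => ?_
    have hle : lam i ≤ lam ⟨0, hm⟩ := hdec (by simp [Fin.le_def])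
    have hsq : 0 ≤ (U *ᵥ w) i * (U *ᵥ w) i := mul_self_nonneg _
    exact mul_le_mul_of_nonneg_right hle hsq
  -- scalar quantities
  set c : ℝ := Real.sqrt 2 * L0 + Real.sqrt (2 * L0 ^ 2 - 2 * Real.log τ) with hc
  set d : ℝ := Real.sqrt (2 * L0 ^ 2 - 2 * Real.log τ) with hd
  have hd0 : 0 ≤ d := Real.sqrt_nonneg _
  have hd2 : d ^ 2 = 2 * L0 ^ 2 - 2 * Real.log τ := Real.sq_sqrt (by linarith)
  have hs2 : Real.sqrt 2 ^ 2 = 2 := Real.sq_sqrt (by norm_num)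
  have hs0 : 0 ≤ Real.sqrt 2 := Real.sqrt_nonneg _
  have hc0 : 0 ≤ c := by positivity
  -- quadInv bound from the constraint
  have hfeas_bound : ∀ b : Fin m → ℝ,
      (quadInv S b / 2 + Real.log τ) / Real.sqrt (2 * quadInv S b) ≤ L0 →
      quadInv S b ≤ c ^ 2 := by
    intro b hb
    have ht0 : 0 ≤ quadInv S b := by
      rw [hquad]; exact Finset.sum_nonneg fun i _ => mul_self_nonneg _
    rcases eq_or_lt_of_le ht0 with h0 | hpos
    · rw [← h0]; positivity
    · set t := quadInv S b with htdef
      set s := Real.sqrt t with hs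
      have hsnn : 0 ≤ s := Real.sqrt_nonneg _
      have hst : s ^ 2 = t := Real.sq_sqrt (le_of_lt hpos)
      have hspos : 0 < s := Real.sqrt_pos.mpr hpos
      have hsqrt2t : Real.sqrt (2 * t) = Real.sqrt 2 * s := by
        rw [Real.sqrt_mul (by norm_num), ← hs]
      have hineq : t / 2 + Real.log τ ≤ L0 * (Real.sqrt 2 * s) := by
        have h2 : 0 < Real.sqrt 2 * s := by positivity
        rw [hsqrt2t] at hb
        calc t / 2 + Real.log τ
            = (t / 2 + Real.log τ) / (Real.sqrt 2 * s) * (Real.sqrt 2 * s) := by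
              field_simp
          _ ≤ L0 * (Real.sqrt 2 * s) := mul_le_mul_of_nonneg_right hb (le_of_lt h2)
      have hsc : s ≤ c := by
        by_contra hcon
        push_neg at hcon
        have h1 : d < s - Real.sqrt 2 * L0 := by rw [hc] at hcon; linarith
        have h2 : d ^ 2 < (s - Real.sqrt 2 * L0) ^ 2 := by nlinarith
        nlinarith [hst, hs2, hd2]
      calc t = s ^ 2 := hst.symm
      _ ≤ c ^ 2 := by nlinarith
  -- main computation for a
  intro ε hε a ha
  have hε2 : ε ^ 2 = 1 := by rcases hε with h | h <;> rw [h] <;> norm_num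
  have hwa : R⁻¹ *ᵥ a = (ε * c) • u ⟨0, hm⟩ := by
    rw [ha, Matrix.mulVec_smul, Matrix.mulVec_smul, Matrix.mulVec_mulVec, hRiR,
      Matrix.one_mulVec, smul_smul]
  have hu00 : u ⟨0, hm⟩ ⬝ᵥ u ⟨0, hm⟩ = 1 := by simpa using horth ⟨0, hm⟩ ⟨0, hm⟩
  have hqa : quadInv S a = c ^ 2 := by
    rw [hquad, hwa, smul_dotProduct, dotProduct_smul, hu00]
    rw [smul_eq_mul, smul_eq_mul]
    linear_combination c ^ 2 * hε2
  have hda : distortion S H Sxx a = lam ⟨0, hm⟩ * c ^ 2 := by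
    rw [hdist, hwa, Matrix.mulVec_smul, smul_dotProduct, dotProduct_smul,
      heig, dotProduct_smul, hu00]
    simp only [smul_eq_mul]
    linear_combination (c ^ 2 * lam ⟨0, hm⟩) * hε2
  constructor
  · -- feasibility
    rw [hqa]
    by_cases hczero : c = 0
    · rw [hczero]
      simp [hL0]
    · have hcpos : 0 < c := lt_of_le_of_ne hc0 (Ne.symm hczero)
      have hsqrt : Real.sqrt (2 * c ^ 2) = Real.sqrt 2 * c := by
        rw [Real.sqrt_mul (by norm_num), Real.sqrt_sq hc0]
      rw [hsqrt, div_le_iff₀ (by positivity)]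
      nlinarith [hd2, hs2]
  · -- optimality
    intro b hb
    have hqb := hfeas_bound b hb
    have ht0 : 0 ≤ quadInv S b := by
      rw [hquad]; exact Finset.sum_nonneg fun i _ => mul_self_nonneg _
    have h1 : distortion S H Sxx b ≤ lam ⟨0, hm⟩ * quadInv S b := by
      rw [hdist, hquad]; exact hspec _
    have h2 : lam ⟨0, hm⟩ * quadInv S b ≤ lam ⟨0, hm⟩ * c ^ 2 :=
      mul_le_mul_of_nonneg_left hqb (hnn _)
    rw [hda]; linarith
end

section
/- Let τ > 1 be the decision threshold of the likelihood-ratio test. For any t > 0, if λ ≥ max(λ*(t), 1), where λ*(t) is the unique positive solution in λ of the equation 2λ·log τ − (1/(2λ))·tr(Δ²) − 2·√(tr(Δ²)·t) − 2·‖Δ‖_∞·t = 0, then the probability of detection of the generalized stealth attack satisfies P_D(λ) ≤ e^{−t}. -/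
open MeasureTheory Matrix ProbabilityTheory
open scoped NNReal ENNReal

section AuxLemmas

open Real

private lemma aux_f0_le {f f' : ℝ → ℝ} {z : ℝ} (hz : 0 ≤ z)
    (hd : ∀ y ∈ Set.Icc (0:ℝ) z, HasDerivAt f (f' y) y)
    (h0 : ∀ y ∈ Set.Icc (0:ℝ) z, 0 ≤ f' y) : f 0 ≤ f z := by
  have hmono : MonotoneOn f (Set.Icc 0 z) := by
    apply monotoneOn_of_deriv_nonneg (convex_Icc 0 z)
    · exact fun y hy => (hd y hy).continuousAt.continuousWithinAt
    · exact fun y hy => ((hd y (interior_subset hy)).differentiableAt).differentiableWithinAt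
    · intro y hy
      rw [(hd y (interior_subset hy)).deriv]
      exact h0 y (interior_subset hy)
  exact hmono (Set.left_mem_Icc.2 hz) (Set.right_mem_Icc.2 hz) hz

private lemma log_ineq_upper {x : ℝ} (h0 : 0 ≤ x) (h1 : x < 1) :
    -Real.log (1 - x) - x ≤ x^2 / (2*(1-x)) := by
  have key : (fun y => Real.log (1-y) + y + y^2/(2*(1-y))) 0
      ≤ (fun y => Real.log (1-y) + y + y^2/(2*(1-y))) x := by
    apply aux_f0_le (f := fun y => Real.log (1-y) + y + y^2/(2*(1-y)))
      (f' := fun y => y^2/(2*(1-y)^2)) h0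
    · intro y hy
      have hy1 : y < 1 := lt_of_le_of_lt hy.2 h1
      have hne : (1:ℝ) - y ≠ 0 := by linarith
      have hlin : HasDerivAt (fun y : ℝ => 1 - y) (-1) y := by
        simpa using (hasDerivAt_id y).const_sub 1
      have hlog : HasDerivAt (fun y : ℝ => Real.log (1-y)) ((1-y)⁻¹ * -1) y :=
        (Real.hasDerivAt_log hne).comp y hlin
      have hsq : HasDerivAt (fun y : ℝ => y^2) (2*y) y := by
        simpa using hasDerivAt_pow 2 y
      have hden : HasDerivAt (fun y : ℝ => 2*(1-y)) (2 * -1) y := hlin.const_mul 2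
      have hne2 : 2*(1-y) ≠ 0 := by
        intro h; exact hne (by linarith [h])
      have hdiv := hsq.div hden hne2
      have htot := (hlog.add (hasDerivAt_id y)).add hdiv
      refine htot.congr_deriv ?_
      field_simp
      ring
    · intro y hy
      positivity
  simp only [Real.log_one] at key
  norm_num at key
  linarith [key]

private lemma log_ineq_lower {x : ℝ} (h0 : 0 ≤ x) (h1 : x < 1) :
    x + x^2/2 ≤ -Real.log (1 - x) := by
  have key : (fun y => -Real.log (1-y) - y - y^2/2) 0
      ≤ (fun y => -Real.log (1-y) - y - y^2/2) x := by
    apply aux_f0_le (f := fun y => -Real.log (1-y) - y - y^2/2)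
      (f' := fun y => y^2/(1-y)) h0
    · intro y hy
      have hy1 : y < 1 := lt_of_le_of_lt hy.2 h1
      have hne : (1:ℝ) - y ≠ 0 := by linarith
      have hlin : HasDerivAt (fun y : ℝ => 1 - y) (-1) y := by
        simpa using (hasDerivAt_id y).const_sub 1
      have hlog : HasDerivAt (fun y : ℝ => Real.log (1-y)) ((1-y)⁻¹ * -1) y :=
        (Real.hasDerivAt_log hne).comp y hlin
      have hsq : HasDerivAt (fun y : ℝ => y^2/2) (2*y/2) y := by
        simpa using (hasDerivAt_pow 2 y).div_const 2
      have htot := ((hlog.neg.sub (hasDerivAt_id y))).sub hsq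
      refine htot.congr_deriv ?_
      field_simp
      ring
    · intro y hy
      have hy1 : y < 1 := lt_of_le_of_lt hy.2 h1
      exact div_nonneg (by positivity) (by linarith)
  simp only [Real.log_one] at key
  norm_num at key
  linarith [key]

private lemma log_one_add_ge {y : ℝ} (hy : 0 ≤ y) : y - y^2/2 ≤ Real.log (1 + y) := by
  have h1y : (0:ℝ) < 1 + y := by linarith
  set x := y/(1+y) with hx
  have hx0 : 0 ≤ x := by positivity
  have hx1 : x < 1 := by
    rw [hx, div_lt_one h1y]; linarith
  have h1x : 1 - x = (1+y)⁻¹ := by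
    rw [hx]; field_simp; ring
  have hlog : Real.log (1 - x) = -Real.log (1+y) := by
    rw [h1x, Real.log_inv]
  have hmain := log_ineq_lower hx0 hx1
  rw [hlog, neg_neg] at hmain
  refine le_trans ?_ hmain
  rw [hx, div_pow]
  rw [← sub_nonneg]
  have heq : y/(1+y) + y^2/(1+y)^2/2 - (y - y^2/2) = y^4/(2*(1+y)^2) := by
    field_simp
    ring
  rw [heq]
  positivity

private lemma gauss_density_integral (g : ℝ → ℝ) :
    ∫ x, g x ∂(gaussianReal 0 1) = ∫ x, gaussianPDFReal 0 1 x * g x := by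
  rw [gaussianReal_of_var_ne_zero 0 one_ne_zero]
  have h1 : (gaussianPDF 0 1)
      = fun x => (((fun y => (gaussianPDFReal 0 1 y).toNNReal) x : ℝ≥0) : ℝ≥0∞) := rfl
  rw [h1, integral_withDensity_eq_integral_smul
    ((measurable_gaussianPDFReal 0 1).real_toNNReal)]
  congr 1
  funext x
  rw [NNReal.smul_def, Real.coe_toNNReal _ (gaussianPDFReal_nonneg 0 1 x)]
  rfl

private lemma gauss_pdf_one (x : ℝ) :
    gaussianPDFReal 0 1 x = (Real.sqrt (2*π))⁻¹ * Real.exp (-(1/2) * x^2) := by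
  simp only [gaussianPDFReal]
  norm_num
  left
  ring

private lemma gauss_sq_integral {c : ℝ} (hc : c < 1/2) :
    ∫ x, Real.exp (c * x^2) ∂(gaussianReal 0 1) = (Real.sqrt (1 - 2*c))⁻¹ := by
  have hb : 0 < 1/2 - c := by linarith
  rw [gauss_density_integral]
  have h2 : ∀ x : ℝ, gaussianPDFReal 0 1 x * Real.exp (c * x^2)
      = (Real.sqrt (2*π))⁻¹ * Real.exp (-(1/2 - c) * x^2) := by
    intro x
    rw [gauss_pdf_one, mul_assoc, ← Real.exp_add]
    ring_nf
  simp_rw [h2]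
  rw [integral_const_mul, integral_gaussian]
  have h3 : Real.sqrt (π/(1/2-c)) = Real.sqrt π / Real.sqrt (1/2-c) :=
    Real.sqrt_div pi_pos.le _
  have h4 : Real.sqrt (2*π) = Real.sqrt 2 * Real.sqrt π :=
    Real.sqrt_mul (by norm_num) _
  have h6 : (1:ℝ) - 2*c = 2*(1/2-c) := by ring
  have h5 : Real.sqrt (1 - 2*c) = Real.sqrt 2 * Real.sqrt (1/2-c) := by
    rw [h6]; exact Real.sqrt_mul (by norm_num) _
  rw [h3, h4, h5]
  have p1 : (0:ℝ) < Real.sqrt π := Real.sqrt_pos.2 pi_pos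
  have p2 : (0:ℝ) < Real.sqrt 2 := Real.sqrt_pos.2 (by norm_num)
  have p3 : (0:ℝ) < Real.sqrt (1/2-c) := Real.sqrt_pos.2 hb
  rw [mul_inv, mul_inv, div_eq_mul_inv]
  calc (Real.sqrt 2)⁻¹ * (Real.sqrt π)⁻¹ * (Real.sqrt π * (Real.sqrt (1/2-c))⁻¹)
      = (Real.sqrt 2)⁻¹ * ((Real.sqrt π)⁻¹ * Real.sqrt π) * (Real.sqrt (1/2-c))⁻¹ := by ring
    _ = (Real.sqrt 2)⁻¹ * (Real.sqrt (1/2-c))⁻¹ := by rw [inv_mul_cancel₀ p1.ne']; ring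

private lemma gauss_sq_integrable {c : ℝ} (hc : c < 1/2) :
    Integrable (fun x => Real.exp (c * x^2)) (gaussianReal 0 1) := by
  have hb : 0 < 1/2 - c := by linarith
  rw [gaussianReal_of_var_ne_zero 0 one_ne_zero]
  have h1 : (gaussianPDF 0 1)
      = fun x => (((fun y => (gaussianPDFReal 0 1 y).toNNReal) x : ℝ≥0) : ℝ≥0∞) := rfl
  rw [h1, integrable_withDensity_iff_integrable_smul
    ((measurable_gaussianPDFReal 0 1).real_toNNReal)]
  have h2 : (fun x => ((gaussianPDFReal 0 1 x).toNNReal : ℝ≥0) • Real.exp (c * x^2))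
      = fun x => (Real.sqrt (2*π))⁻¹ * Real.exp (-(1/2 - c) * x^2) := by
    funext x
    rw [NNReal.smul_def, Real.coe_toNNReal _ (gaussianPDFReal_nonneg 0 1 x)]
    show gaussianPDFReal 0 1 x * Real.exp (c * x^2) = _
    rw [gauss_pdf_one, mul_assoc, ← Real.exp_add]
    ring_nf
  rw [h2]
  exact (integrable_exp_neg_mul_sq hb).const_mul _

private lemma pi_exp_sq_integrable {p : ℕ} (c : Fin p → ℝ) (hc : ∀ i, c i < 1/2) :
    Integrable (fun u : Fin p → ℝ => ∏ i, Real.exp (c i * (u i)^2))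
      (Measure.pi fun _ => gaussianReal 0 1) := by
  letI : MeasureSpace ℝ := ⟨gaussianReal 0 1⟩
  haveI : SigmaFinite (volume : Measure ℝ) := by
    show SigmaFinite (gaussianReal 0 1); infer_instance
  have hvol : (Measure.pi fun _ : Fin p => gaussianReal 0 1) = (volume : Measure (Fin p → ℝ)) :=
    (MeasureTheory.volume_pi).symm
  rw [hvol]
  exact Integrable.fintype_prod (f := fun i x => Real.exp (c i * x^2))
    (fun i => gauss_sq_integrable (hc i))

private lemma pi_exp_sq_integral {p : ℕ} (c : Fin p → ℝ) (hc : ∀ i, c i < 1/2) :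
    ∫ u, (∏ i, Real.exp (c i * (u i)^2)) ∂(Measure.pi fun _ : Fin p => gaussianReal 0 1)
      = ∏ i, (Real.sqrt (1 - 2 * c i))⁻¹ := by
  letI : MeasureSpace ℝ := ⟨gaussianReal 0 1⟩
  haveI : SigmaFinite (volume : Measure ℝ) := by
    show SigmaFinite (gaussianReal 0 1); infer_instance
  have hvol : (Measure.pi fun _ : Fin p => gaussianReal 0 1) = (volume : Measure (Fin p → ℝ)) :=
    (MeasureTheory.volume_pi).symm
  rw [MeasureTheory.integral_fintype_prod_eq_prod (f := fun i x => Real.exp (c i * x^2))]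
  exact Finset.prod_congr rfl fun i _ => gauss_sq_integral (hc i)

private lemma diag_entries_nonneg' {k : ℕ} {M : Matrix (Fin k) (Fin k) ℝ} (hM : M.PosSemidef)
    (j : Fin k) : 0 ≤ M j j := by
  exact hM.diag_nonneg

private lemma eig_nonneg' {k : ℕ} {M U : Matrix (Fin k) (Fin k) ℝ} {d : Fin k → ℝ}
    (hM : M.PosSemidef) (hU : U * U.transpose = 1)
    (hdec : M = U * Matrix.diagonal d * U.transpose) (j : Fin k) : 0 ≤ d j := by
  have hUtU : U.transpose * U = 1 := mul_eq_one_comm.mp hU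
  have hpsd : (U.transpose * M * U).PosSemidef := by
    have := hM.conjTranspose_mul_mul_same U
    rwa [Matrix.conjTranspose_eq_transpose_of_trivial] at this
  have hdiag : Matrix.diagonal d = U.transpose * M * U := by
    have h1 : U.transpose * (U * Matrix.diagonal d * U.transpose) * U
        = (U.transpose * U) * Matrix.diagonal d * (U.transpose * U) := by
      simp only [Matrix.mul_assoc]
    rw [hdec, h1, hUtU, Matrix.one_mul, Matrix.mul_one]
  rw [← hdiag] at hpsd
  have := diag_entries_nonneg' hpsd j
  simpa using this

end AuxLemmas

set_option maxHeartbeats 1000000 in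
theorem detection_probability_upper_bound
    {m n : ℕ} (H : Matrix (Fin m) (Fin n) ℝ) (Sxx : Matrix (Fin n) (Fin n) ℝ)
    (hXX : Sxx.PosDef) (σ : ℝ) (hσ : 0 < σ)
    (Syy : Matrix (Fin m) (Fin m) ℝ)
    (hSyy : Syy = H * Sxx * H.transpose + σ ^ 2 • (1 : Matrix (Fin m) (Fin m) ℝ))
    (τ : ℝ) (hτ : 1 < τ)
    -- eigendecomposition of H Σ_XX Hᵀ, eigenvalues in descending order
    (Um : Matrix (Fin m) (Fin m) ℝ) (hUm : Um * Um.transpose = 1)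
    (mu : Fin m → ℝ) (hmu_dec : Antitone mu)
    (hmu : H * Sxx * H.transpose = Um * Matrix.diagonal mu * Um.transpose)
    -- eigendecomposition of Σ_YY⁻¹, eigenvalues in descending order
    (Uy : Matrix (Fin m) (Fin m) ℝ) (hUy : Uy * Uy.transpose = 1)
    (nu : Fin m → ℝ) (hnu_dec : Antitone nu)
    (hnu : Syy⁻¹ = Uy * Matrix.diagonal nu * Uy.transpose)
    -- p = rank(H Σ_XX Hᵀ) and Δ_{i,i} = λ_i(H Σ_XX Hᵀ) λ_i(Σ_YY⁻¹) ≤ 1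
    (p : ℕ) (hp : p = (H * Sxx * H.transpose).rank) (hpm : p ≤ m)
    (D : Fin p → ℝ) (hD : ∀ i, D i = mu (Fin.castLE hpm i) * nu (Fin.castLE hpm i))
    (hD1 : ∀ i, D i ≤ 1)
    -- the probability of detection of the generalized stealth attack of parameter λ
    (PD : ℝ → ℝ)
    (hPD : ∀ l : ℝ, PD l =
      ((Measure.pi fun _ : Fin p => gaussianReal 0 1)
        {u : Fin p → ℝ | u ⬝ᵥ (Matrix.diagonal D) *ᵥ u ≥
          l * (2 * Real.log τ +
            Real.log ((1 + l⁻¹ • Matrix.diagonal D).det))}).toReal)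
    (t : ℝ) (ht : 0 < t)
    -- λ*(t): the unique positive solution of the threshold equation
    (lamStar : ℝ) (hlamStar_pos : 0 < lamStar)
    (hlamStar : 2 * lamStar * Real.log τ
        - (1 / (2 * lamStar)) * (Matrix.diagonal D * Matrix.diagonal D).trace
        - 2 * Real.sqrt ((Matrix.diagonal D * Matrix.diagonal D).trace * t)
        - 2 * (⨆ i, D i) * t = 0)
    (hlamStar_uniq : ∀ x : ℝ, 0 < x →
      2 * x * Real.log τ
        - (1 / (2 * x)) * (Matrix.diagonal D * Matrix.diagonal D).trace
        - 2 * Real.sqrt ((Matrix.diagonal D * Matrix.diagonal D).trace * t)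
        - 2 * (⨆ i, D i) * t = 0 → x = lamStar) :
    ∀ lam : ℝ, max lamStar 1 ≤ lam → PD lam ≤ Real.exp (-t) := by
  intro lam hlam
  have hl1 : (1:ℝ) ≤ lam := le_trans (le_max_right _ _) hlam
  have hls : lamStar ≤ lam := le_trans (le_max_left _ _) hlam
  have hlpos : (0:ℝ) < lam := lt_of_lt_of_le one_pos hl1
  have hlogτ : 0 < Real.log τ := Real.log_pos hτ
  -- nonnegativity of D
  have hMpsd : (H * Sxx * H.transpose).PosSemidef := by
    have := hXX.posSemidef.mul_mul_conjTranspose_same H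
    rwa [Matrix.conjTranspose_eq_transpose_of_trivial] at this
  have hmu0 : ∀ j, 0 ≤ mu j := eig_nonneg' hMpsd hUm hmu
  have hSyyPsd : Syy.PosSemidef := by
    rw [hSyy]
    apply hMpsd.add
    have h1 : σ^2 • (1 : Matrix (Fin m) (Fin m) ℝ)
        = Matrix.diagonal (fun _ : Fin m => σ^2) := by
      ext i j
      rcases eq_or_ne i j with rfl | hij
      · simp
      · simp [Matrix.one_apply_ne hij, Matrix.diagonal_apply_ne _ hij]
    rw [h1]
    exact Matrix.PosSemidef.diagonal (fun i => by positivity)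
  have hnu0 : ∀ j, 0 ≤ nu j := eig_nonneg' hSyyPsd.inv hUy hnu
  have hD0 : ∀ i, 0 ≤ D i := fun i => (hD i) ▸ mul_nonneg (hmu0 _) (hnu0 _)
  -- scalar abbreviations
  set v : ℝ := ∑ i, D i ^ 2 with hv_def
  have htr : (Matrix.diagonal D * Matrix.diagonal D).trace = v := by
    rw [Matrix.diagonal_mul_diagonal, Matrix.trace_diagonal, hv_def]
    exact Finset.sum_congr rfl fun i _ => (pow_two (D i)).symm
  have hv0 : 0 ≤ v := Finset.sum_nonneg fun i _ => sq_nonneg _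
  set b : ℝ := ⨆ i, D i with hb_def
  have hDb : ∀ i, D i ≤ b := fun i => le_ciSup (Set.Finite.bddAbove (Set.finite_range D)) i
  rw [htr] at hlamStar
  set w : ℝ := 2 * Real.sqrt (v * t) + 2 * b * t with hw_def
  have hw : 2 * lamStar * Real.log τ - (1/(2*lamStar)) * v = w := by
    rw [hw_def]; linarith [hlamStar]
  -- degenerate case v = 0 is impossible
  by_cases hv : v = 0
  · exfalso
    have hsumz : ∑ i, D i ^ 2 = 0 := by rw [← hv_def]; exact hv
    have hDzero : ∀ i, D i = 0 := by
      intro i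
      have := (Finset.sum_eq_zero_iff_of_nonneg
        (fun i _ => sq_nonneg (D i))).mp hsumz i (Finset.mem_univ i)
      exact sq_eq_zero_iff.mp this
    have hb0' : b = 0 := by
      rcases Nat.eq_zero_or_pos p with hp0 | hp0
      · haveI : IsEmpty (Fin p) := ⟨fun i => by have := i.2; omega⟩
        rw [hb_def]
        exact Real.iSup_of_isEmpty _
      · haveI : Nonempty (Fin p) := ⟨⟨0, hp0⟩⟩
        refine le_antisymm ?_ ?_
        · rw [hb_def]; exact ciSup_le fun i => (hDzero i).le
        · have h := hDb ⟨0, hp0⟩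
          rw [hDzero ⟨0, hp0⟩] at h
          exact h
    have hsq0 : Real.sqrt (v * t) = 0 := by rw [hv, zero_mul, Real.sqrt_zero]
    rw [hsq0, hv, hb0'] at hlamStar
    have h2 : 2 * lamStar * Real.log τ = 0 := by linarith [hlamStar]
    nlinarith [mul_pos (mul_pos two_pos hlamStar_pos) hlogτ]
  -- main case
  have hvpos : 0 < v := lt_of_le_of_ne hv0 (Ne.symm hv)
  have hbpos : 0 < b := by
    by_contra hb
    push_neg at hb
    have hall : ∀ i, D i = 0 := fun i => le_antisymm (le_trans (hDb i) hb) (hD0 i)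
    apply hv
    rw [hv_def]
    exact Finset.sum_eq_zero fun i _ => by rw [hall i]; ring
  set sv := Real.sqrt v with hsv_def
  set st := Real.sqrt t with hst_def
  have hsv : 0 < sv := Real.sqrt_pos.mpr hvpos
  have hst : 0 < st := Real.sqrt_pos.mpr ht
  have hsv2 : sv^2 = v := Real.sq_sqrt hv0
  have hst2 : st^2 = t := Real.sq_sqrt ht.le
  set den := sv + 2*b*st with hden_def
  have hden : 0 < den := by
    have := mul_pos (mul_pos two_pos hbpos) hst
    rw [hden_def]; linarith
  set s := st/den with hs_def
  have hspos : 0 < s := div_pos hst hden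
  have h1sb : 1 - 2*s*b = sv/den := by
    rw [hs_def, hden_def]
    field_simp
    ring
  have h1sbpos : 0 < 1 - 2*s*b := by rw [h1sb]; exact div_pos hsv hden
  have hsDB : ∀ i, 2*s*D i ≤ 2*s*b := fun i => by nlinarith [hDb i, hspos.le]
  have hx_lt : ∀ i, 2*s*D i < 1 := fun i => lt_of_le_of_lt (hsDB i) (by linarith)
  have hx0 : ∀ i, 0 ≤ 2*s*D i := fun i =>
    mul_nonneg (by linarith [hspos]) (hD0 i)
  have hci : ∀ i, s*D i < 1/2 := fun i => by linarith [hx_lt i]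
  -- rewrite PD
  rw [hPD lam]
  set μp := Measure.pi fun _ : Fin p => gaussianReal 0 1 with hμp
  set K := lam * (2 * Real.log τ + Real.log ((1 + lam⁻¹ • Matrix.diagonal D).det)) with hK_def
  set X : (Fin p → ℝ) → ℝ := fun u => ∑ i, D i * (u i)^2 with hX_def
  have hfeq : (fun u : Fin p → ℝ => Real.exp (s * X u))
      = fun u => ∏ i, Real.exp ((s * D i) * (u i)^2) := by
    funext u
    rw [hX_def]
    simp only
    rw [Finset.mul_sum, Real.exp_sum]
    exact Finset.prod_congr rfl fun i _ => by rw [mul_assoc]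
  have hXint : Integrable (fun u => Real.exp (s * X u)) μp := by
    rw [hfeq, hμp]
    exact pi_exp_sq_integrable _ hci
  haveI : IsProbabilityMeasure μp := by rw [hμp]; infer_instance
  have hchern := measure_ge_le_exp_mul_mgf (μ := μp) (X := X) K hspos.le hXint
  have hmgf : mgf X μp s = ∏ i, (Real.sqrt (1 - 2 * (s * D i)))⁻¹ := by
    show (∫ u, Real.exp (s * X u) ∂μp) = _
    rw [hfeq, hμp]
    exact pi_exp_sq_integral _ hci
  have hsetq : {u : Fin p → ℝ | u ⬝ᵥ (Matrix.diagonal D) *ᵥ u ≥ K} = {u | K ≤ X u} := by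
    ext u
    have hq : u ⬝ᵥ (Matrix.diagonal D) *ᵥ u = X u := by
      rw [hX_def]
      simp only [dotProduct, Matrix.mulVec_diagonal]
      exact Finset.sum_congr rfl fun i _ => by ring
    simp only [Set.mem_setOf_eq, ge_iff_le, hq]
  rw [hsetq]
  refine le_trans hchern ?_
  rw [hmgf]
  -- bound the product by an exponential
  have hzpos : ∀ i, 0 < 1 - 2 * (s * D i) := fun i => by
    have := hx_lt i; rw [← mul_assoc]; linarith
  have hprod : ∏ i, (Real.sqrt (1 - 2 * (s * D i)))⁻¹
      = Real.exp (∑ i, -(1/2) * Real.log (1 - 2 * (s * D i))) := by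
    rw [Real.exp_sum]
    refine Finset.prod_congr rfl fun i _ => ?_
    rw [Real.sqrt_eq_rpow, Real.rpow_def_of_pos (hzpos i), ← Real.exp_neg]
    congr 1
    ring
  rw [hprod, ← Real.exp_add, Real.exp_le_exp]
  -- Step A: lower bound on K
  have hdetm : (1 + lam⁻¹ • Matrix.diagonal D) = Matrix.diagonal (fun i => 1 + lam⁻¹ * D i) := by
    ext i j
    rcases eq_or_ne i j with rfl | hij
    · simp
    · simp [Matrix.one_apply_ne hij, Matrix.diagonal_apply_ne _ hij]
  have hyi0 : ∀ i : Fin p, 0 ≤ lam⁻¹ * D i := fun i =>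
    mul_nonneg (inv_nonneg.mpr hlpos.le) (hD0 i)
  have hlogdet : Real.log ((1 + lam⁻¹ • Matrix.diagonal D).det)
      = ∑ i, Real.log (1 + lam⁻¹ * D i) := by
    rw [hdetm, Matrix.det_diagonal]
    exact Real.log_prod fun i _ => by have := hyi0 i; positivity
  have hlog_each : ∀ i : Fin p, lam⁻¹ * D i - (lam⁻¹ * D i)^2/2 ≤ Real.log (1 + lam⁻¹ * D i) :=
    fun i => log_one_add_ge (hyi0 i)
  have hsum1 : ∑ i, (lam⁻¹ * D i - (lam⁻¹ * D i)^2/2)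
      = (∑ i, D i) * lam⁻¹ - v * (2*lam^2)⁻¹ := by
    have e : ∀ i : Fin p, lam⁻¹ * D i - (lam⁻¹ * D i)^2/2
        = D i * lam⁻¹ - D i^2 * (2*lam^2)⁻¹ := by
      intro i
      field_simp
    rw [Finset.sum_congr rfl fun i _ => e i, Finset.sum_sub_distrib,
      ← Finset.sum_mul, ← Finset.sum_mul, hv_def]
  have hKlb : 2*lam*Real.log τ + (∑ i, D i) - v/(2*lam) ≤ K := by
    rw [hK_def, hlogdet]
    have hsum_ge : (∑ i, D i) * lam⁻¹ - v * (2*lam^2)⁻¹ ≤ ∑ i, Real.log (1 + lam⁻¹ * D i) := by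
      rw [← hsum1]
      exact Finset.sum_le_sum fun i _ => hlog_each i
    have h2 := mul_le_mul_of_nonneg_left hsum_ge hlpos.le
    have h3 : lam * ((∑ i, D i) * lam⁻¹ - v * (2*lam^2)⁻¹)
        = (∑ i, D i) - v/(2*lam) := by
      field_simp
    have h4 : lam * (2*Real.log τ + ∑ i, Real.log (1 + lam⁻¹ * D i))
        = 2*lam*Real.log τ + lam * (∑ i, Real.log (1 + lam⁻¹ * D i)) := by ring
    linarith [h2, h3, h4]
  -- Step A': monotonicity in lam
  have hmono : w ≤ 2*lam*Real.log τ - v/(2*lam) := by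
    have hdd : v/(2*lam) ≤ v/(2*lamStar) :=
      div_le_div_of_nonneg_left hv0 (by linarith) (by linarith)
    have hrw : (1/(2*lamStar)) * v = v/(2*lamStar) := by ring
    rw [← hw]
    rw [hrw]
    nlinarith [mul_le_mul_of_nonneg_right hls hlogτ.le]
  have hK0 : (∑ i, D i) + w ≤ K := by linarith
  -- Step B: per-term bound on the log terms
  have hterm : ∀ i : Fin p, -(1/2) * Real.log (1 - 2 * (s * D i))
      ≤ s * D i + s^2 * (D i)^2 / (1 - 2*s*b) := by
    intro i
    have hxi0 : 0 ≤ 2 * (s * D i) := by rw [← mul_assoc]; exact hx0 i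
    have hxi1 : 2 * (s * D i) < 1 := by rw [← mul_assoc]; exact hx_lt i
    have hmain := log_ineq_upper hxi0 hxi1
    have hne := (hzpos i).ne'
    have hq1 : (2*(s*D i))^2/(2*(1 - 2*(s*D i))) = 2*(s^2*(D i)^2/(1 - 2*(s*D i))) := by
      field_simp
    have hxle : 1 - 2*s*b ≤ 1 - 2*(s*D i) := by
      rw [← mul_assoc]
      linarith [hsDB i]
    have hq2 : s^2*(D i)^2/(1 - 2*(s*D i)) ≤ s^2*(D i)^2/(1 - 2*s*b) :=
      div_le_div_of_nonneg_left (by positivity) h1sbpos hxle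
    rw [hq1] at hmain
    linarith
  have hsumB : ∑ i, (s*D i + s^2*(D i)^2/(1 - 2*s*b))
      = s*(∑ i, D i) + s^2*v/(1 - 2*s*b) := by
    rw [Finset.sum_add_distrib, ← Finset.mul_sum]
    congr 1
    rw [← Finset.sum_div, ← Finset.mul_sum, hv_def]
  have hB : ∑ i, -(1/2) * Real.log (1 - 2*(s*D i))
      ≤ s*(∑ i, D i) + s^2*v/(1 - 2*s*b) := by
    rw [← hsumB]
    exact Finset.sum_le_sum fun i _ => hterm i
  -- Step C: key identity
  have hvt : Real.sqrt (v*t) = sv*st := by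
    rw [hsv_def, hst_def]
    exact Real.sqrt_mul hv0 t
  have hkey : s^2*v/(1 - 2*s*b) = s*w - t := by
    rw [h1sb, hw_def, hvt, hs_def, hden_def, ← hsv2, ← hst2]
    field_simp
    ring
  -- conclusion
  have hsK : s*(∑ i, D i) + s*w ≤ s*K := by
    have h := mul_le_mul_of_nonneg_left hK0 hspos.le
    rw [mul_add] at h
    exact h
  have hfin : ∑ i, -(1/2) * Real.log (1 - 2*(s*D i)) ≤ s*K - t := by
    calc ∑ i, -(1/2) * Real.log (1 - 2*(s*D i))
        ≤ s*(∑ i, D i) + s^2*v/(1 - 2*s*b) := hB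
      _ = s*(∑ i, D i) + (s*w - t) := by rw [hkey]
      _ ≤ s*K - t := by linarith [hsK]
  linarith [hfin]
end
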